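/- arXiv:2507.20381 — 9 statements merged into one kernel-verified Lean document; each statement's English description precedes it below -/
import Mathlib

section
/- Let n ∈ ω and let M be an infinite L-structure. If M is (n+2)-sunflowerable then M is (n+1)-sunflowerable. -/
open FirstOrder Cardinal

universe u v w x

namespace StructuredSunflowers

/-- A sunflower (Δ-system): a family of sets whose pairwise intersections of
distinct members all equal a common core `r`. -/
def IsSunflower {β : Type*} (Y : Set (Set β)) : Prop :=
  ∃ r : Set β, ∀ p ∈ Y, ∀ q ∈ Y, p ≠ q → p ∩ q = r

variable (L : FirstOrder.Language.{u, v})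

/-- `M` is `n`-sunflowerable: every isomorphic copy of `M` whose underlying set consists of
sets of size `n` contains a substructure isomorphic to the whole whose underlying
set is a sunflower. -/
def NSunflowerable (M : Type w) [L.Structure M] (n : ℕ) : Prop :=
  ∀ (β : Type x) (Y : Set (Set β)) (_ : L.Structure Y),
    (∀ p ∈ Y, p.Finite ∧ p.ncard = n) →
    Nonempty (M ≃[L] Y) →
    ∃ g : M ↪[L] Y, IsSunflower ((fun z : Y => (z : Set β)) '' Set.range g)

/-- `M` is sunflowerable if it is `n`-sunflowerable for every `n`. -/
def Sunflowerable (M : Type w) [L.Structure M] : Prop :=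
  ∀ n : ℕ, NSunflowerable.{u, v, w, x} L M n

/-- `M` is strongly sunflowerable: same as sunflowerable, but for copies whose
underlying sets consist of finite sets of arbitrary sizes. -/
def StronglySunflowerable (M : Type w) [L.Structure M] : Prop :=
  ∀ (β : Type x) (Y : Set (Set β)) (_ : L.Structure Y),
    (∀ p ∈ Y, p.Finite) →
    Nonempty (M ≃[L] Y) →
    ∃ g : M ↪[L] Y, IsSunflower ((fun z : Y => (z : Set β)) '' Set.range g)

/-- `M` is indivisible: any partition of `M` into fewer than `|M|` pieces has a piece
containing the range of a self-embedding of `M` (i.e. a copy of `M`). -/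
def Indivisible (M : Type w) [L.Structure M] : Prop :=
  ∀ (ι : Type w) (P : ι → Set M), #ι < #M →
    (∀ m : M, ∃! i : ι, m ∈ P i) →
    ∃ i : ι, ∃ g : M ↪[L] M, Set.range g ⊆ P i

/-- `qftp(a̅, x) = qftp(b̅, y)`: the extended tuples satisfy the same quantifier-free
formulas. -/
def SameQFTypeExt {M : Type w} [L.Structure M] {ι : Type*} (a b : ι → M) (x y : M) : Prop :=
  ∀ φ : L.Formula (ι ⊕ Unit), φ.IsQF →
    (φ.Realize (Sum.elim a fun _ => x) ↔ φ.Realize (Sum.elim b fun _ => y))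

/-- `qftp(a̅) = qftp(b̅)`: two tuples satisfy the same quantifier-free formulas. -/
def SameQFType {M : Type w} [L.Structure M] {ι : Type*} (a b : ι → M) : Prop :=
  ∀ φ : L.Formula ι, φ.IsQF → (φ.Realize a ↔ φ.Realize b)

/-- Universal duplication of ω-quantifier-free types: for each finite tuple `a̅` and
`x ∉ a̅`, the set `B_{a̅,x}` of realizations of `qftp(a̅,x)` over `a̅` contains a copy of `M`. -/
def UnivDupQF (M : Type w) [L.Structure M] : Prop :=
  ∀ (n : ℕ) (a : Fin n → M) (x : M), x ∉ Set.range a →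
    ∃ g : M ↪[L] M, Set.range g ⊆ {b : M | SameQFTypeExt L a a x b}

/-- Universal duplication of κ-quantifier-free types. -/
def UnivDupQFAt (M : Type w) [L.Structure M] (κ : Cardinal.{w}) : Prop :=
  ∀ (ι : Type w), #ι < κ → ∀ (a : ι → M) (x : M), x ∉ Set.range a →
    ∃ g : M ↪[L] M, Set.range g ⊆ {b : M | SameQFTypeExt L a a x b}

/-- Strong universal duplication of κ-quantifier-free types: the substructure on all of
`B_{a̅,x}` is isomorphic to `M`. -/
def StrongUnivDupQFAt (M : Type w) [L.Structure M] (κ : Cardinal.{w}) : Prop :=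
  ∀ (ι : Type w), #ι < κ → ∀ (a : ι → M) (x : M), x ∉ Set.range a →
    ∃ g : M ↪[L] M, Set.range g = {b : M | SameQFTypeExt L a a x b}

/-- κ-saturation: every finitely realized set of formulas in one variable over fewer than
κ parameters is realized. -/
def IsSaturated (M : Type w) [L.Structure M] (κ : Cardinal.{w}) : Prop :=
  ∀ (ι : Type w), #ι < κ → ∀ (a : ι → M) (p : Set (L.Formula (ι ⊕ Unit))),
    (∀ s : Finset (L.Formula (ι ⊕ Unit)), ↑s ⊆ p →
      ∃ x : M, ∀ φ ∈ s, φ.Realize (Sum.elim a fun _ => x)) →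
    ∃ x : M, ∀ φ ∈ p, φ.Realize (Sum.elim a fun _ => x)

/-- `M` has quantifier elimination: every formula is equivalent in `M` to a
quantifier-free formula. -/
def HasQE (M : Type w) [L.Structure M] : Prop :=
  ∀ (n : ℕ) (φ : L.Formula (Fin n)), ∃ ψ : L.Formula (Fin n), ψ.IsQF ∧
    ∀ v : Fin n → M, (φ.Realize v ↔ ψ.Realize v)

/-- 3-amalgamation of quantifier-free types, stated via realized tuples. -/
def ThreeAmalgQF (M : Type w) [L.Structure M] : Prop :=
  ∀ (k l m : ℕ) (xa xa' : Fin k → M) (yb yb' : Fin l → M) (zc zc' : Fin m → M),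
    SameQFType L xa xa' → SameQFType L yb yb' → SameQFType L zc zc' →
    ∃ (xx : Fin k → M) (yy : Fin l → M) (zz : Fin m → M),
      SameQFType L (Fin.append xx yy) (Fin.append xa yb) ∧
      SameQFType L (Fin.append yy zz) (Fin.append yb' zc) ∧
      SameQFType L (Fin.append zz xx) (Fin.append zc' xa')

/-- Ultrahomogeneity: tuples of length `< |M|` with the same quantifier-free type have the
one-point extension property. -/
def UltraHomog (M : Type w) [L.Structure M] : Prop :=
  ∀ (ι : Type w), #ι < #M → ∀ (a b : ι → M), SameQFType L a b →
    ∀ x : M, ∃ y : M, SameQFTypeExt L a b x y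


/-- If an infinite `L`-structure `M` is `(n+2)`-sunflowerable then it is
`(n+1)`-sunflowerable. -/
theorem nsunflowerable_of_succ (L : FirstOrder.Language.{u, v}) (M : Type w) [L.Structure M]
    [Infinite M] (n : ℕ) (h : NSunflowerable.{u, v, w, x} L M (n + 2)) :
    NSunflowerable.{u, v, w, x} L M (n + 1) := by
  intro β Y instY hcard hiso
  obtain ⟨iso⟩ := hiso
  classical
  set f : Set β → Set (Option β) := fun p => insert none (Option.some '' p) with hf
  have finj : Function.Injective f := by
    intro p q hpq
    ext a
    have := Set.ext_iff.mp hpq (some a)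
    simpa [f] using this
  let e : Y ≃ ↥(f '' Y) := Equiv.Set.image f Y finj
  have he : ∀ z : Y, ((e z : Set (Option β))) = f (z : Set β) := fun z => rfl
  have hesymm : ∀ w : ↥(f '' Y), f ((e.symm w : Y) : Set β) = (w : Set (Option β)) := by
    intro w
    have := he (e.symm w)
    rw [Equiv.apply_symm_apply] at this
    exact this.symm
  letI instY' : L.Structure ↥(f '' Y) := Equiv.inducedStructure e
  have hcard' : ∀ q ∈ f '' Y, q.Finite ∧ q.ncard = n + 2 := by
    rintro q ⟨p, hp, rfl⟩
    obtain ⟨hfin, hn⟩ := hcard p hp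
    have hnone : (none : Option β) ∉ Option.some '' p := by simp
    have hfin' : (Option.some '' p).Finite := hfin.image _
    refine ⟨hfin'.insert _, ?_⟩
    rw [hf]
    simp only
    rw [Set.ncard_insert_of_notMem hnone hfin',
      Set.ncard_image_of_injective p (Option.some_injective β), hn]
  obtain ⟨g', r, hr⟩ := h (Option β) (f '' Y) instY' hcard'
    ⟨FirstOrder.Language.Equiv.comp (Equiv.inducedStructureEquiv (L := L) e) iso⟩
  refine ⟨((Equiv.inducedStructureEquiv e).symm.toEmbedding.comp g'), Option.some ⁻¹' r, ?_⟩
  rintro p ⟨zp, ⟨mp, rfl⟩, rfl⟩ q ⟨zq, ⟨mq, rfl⟩, rfl⟩ hpq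
  have hc : ∀ m : M,
      ((((Equiv.inducedStructureEquiv e).symm.toEmbedding.comp g') m : Y) : Set β)
        = ((e.symm (g' m) : Y) : Set β) := fun m => rfl
  simp only [hc] at hpq ⊢
  have hfp : f ((e.symm (g' mp) : Y) : Set β) = (g' mp : Set (Option β)) := hesymm _
  have hfq : f ((e.symm (g' mq) : Y) : Set β) = (g' mq : Set (Option β)) := hesymm _
  have hne : (g' mp : Set (Option β)) ≠ (g' mq : Set (Option β)) := by
    intro hEq
    apply hpq
    apply finj
    rw [hfp, hfq, hEq]
  have hinter : (g' mp : Set (Option β)) ∩ (g' mq : Set (Option β)) = r :=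
    hr _ ⟨g' mp, ⟨mp, rfl⟩, rfl⟩ _ ⟨g' mq, ⟨mq, rfl⟩, rfl⟩ hne
  ext a
  have : (some a ∈ (g' mp : Set (Option β)) ∩ (g' mq : Set (Option β))) ↔ some a ∈ r := by
    rw [hinter]
  rw [← hfp, ← hfq] at this
  simpa [f] using this

end StructuredSunflowers
end

section
/- If an infinite L-structure M is 2-sunflowerable, then M is indivisible: for every partition (P_i)_{i∈α} of the underlying set M with α < |M|, there is some i ∈ α and Q ⊆ P_i such that the substructure of M on Q is isomorphic to M. -/
open FirstOrder Cardinal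

universe u v w x

namespace StructuredSunflowers

variable (L : FirstOrder.Language.{u, v})

/-- A `2`-sunflowerable infinite structure is indivisible. -/
theorem indivisible_of_twoSunflowerable (L : FirstOrder.Language.{u, v}) (M : Type w) [L.Structure M]
    [Infinite M] (h : NSunflowerable.{u, v, w, w} L M 2) : Indivisible L M := by
  intro ι P hlt hP
  -- color function
  set c : M → ι := fun m => (hP m).choose with hc
  have hcmem : ∀ m, m ∈ P (c m) := fun m => (hP m).choose_spec.1
  have hcuniq : ∀ m i, m ∈ P i → i = c m := fun m i hi => (hP m).choose_spec.2 i hi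
  -- the copy of M on 2-element sets
  set f : M → Set (M ⊕ ι) := fun m => {Sum.inl m, Sum.inr (c m)} with hfdef
  have hf : Function.Injective f := by
    intro m m' hmm
    have : Sum.inl m ∈ f m' := hmm ▸ Set.mem_insert _ _
    rcases this with h1 | h1
    · exact Sum.inl.inj h1
    · exact absurd h1 (by simp)
  set Y : Set (Set (M ⊕ ι)) := Set.range f with hY
  let e0 : M ≃ Y := Equiv.ofInjective f hf
  letI : L.Structure Y := e0.inducedStructure
  have hfin : ∀ p ∈ Y, p.Finite ∧ p.ncard = 2 := by
    rintro p ⟨m, rfl⟩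
    refine ⟨Set.toFinite _, ?_⟩
    exact Set.ncard_pair (by simp)
  obtain ⟨g, r, hr⟩ := h (M ⊕ ι) Y _ hfin ⟨e0.inducedStructureEquiv⟩
  -- u m : the element whose f-image is g m
  set u : M → M := fun m => e0.symm (g m) with hu
  have hgu : ∀ m, (g m : Set (M ⊕ ι)) = f (u m) := by
    intro m
    have : e0 (u m) = g m := Equiv.apply_symm_apply _ _
    rw [← this]
    rfl
  have huinj : Function.Injective u :=
    fun m m' hmm => g.injective (by
      have := congrArg e0 hmm
      simpa [u, Equiv.apply_symm_apply] using this)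
  have hmemim : ∀ m, (g m : Set (M ⊕ ι)) ∈ ((fun z : Y => (z : Set (M ⊕ ι))) '' Set.range g) :=
    fun m => ⟨g m, Set.mem_range_self m, rfl⟩
  have hne : ∀ m m', m ≠ m' → (g m : Set (M ⊕ ι)) ≠ (g m' : Set (M ⊕ ι)) := by
    intro m m' hmm hcontra
    rw [hgu, hgu] at hcontra
    exact hmm (huinj (hf hcontra))
  -- r is nonempty
  have hrne : r.Nonempty := by
    by_contra hre
    rw [Set.not_nonempty_iff_eq_empty] at hre
    subst hre
    -- then c ∘ u is injective, contradicting #ι < #M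
    have hinj : Function.Injective (fun m => c (u m)) := by
      intro m m' hmm
      by_contra hne'
      have hd := hr _ (hmemim m) _ (hmemim m') (hne m m' hne')
      have : Sum.inr (c (u m)) ∈ (g m : Set (M ⊕ ι)) ∩ (g m' : Set (M ⊕ ι)) := by
        constructor
        · rw [hgu]; exact Set.mem_insert_of_mem _ rfl
        · rw [hgu]; simp only [hmm]; exact Set.mem_insert_of_mem _ rfl
      rw [hd] at this
      exact this
    exact absurd (Cardinal.mk_le_of_injective hinj) (not_le.2 hlt)
  obtain ⟨m1, m2, hm12⟩ := exists_pair_ne M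
  set i : ι := c (u m1) with hi
  -- r = {inr i}
  have hrsub : r ⊆ {Sum.inr i} := by
    have hd := hr _ (hmemim m1) _ (hmemim m2) (hne m1 m2 hm12)
    intro x hx
    rw [← hd] at hx
    obtain ⟨hx1, hx2⟩ := hx
    rw [hgu] at hx1 hx2
    rcases hx1 with h1 | h1
    · subst h1
      rcases hx2 with h2 | h2
      · exact absurd (huinj (Sum.inl.inj h2)) hm12
      · exact absurd h2 (by simp)
    · simp only [Set.mem_singleton_iff] at h1
      subst h1; rfl
  have hrinr : Sum.inr i ∈ r := by
    obtain ⟨x, hx⟩ := hrne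
    have hxe : x = Sum.inr i := hrsub hx
    rwa [hxe] at hx
  -- all u m have color i
  have hall : ∀ m, c (u m) = i := by
    intro m
    by_cases hm : u m = u m1
    · rw [hm]
    · have hgne : (g m : Set (M ⊕ ι)) ≠ (g m1 : Set (M ⊕ ι)) := by
        rw [hgu, hgu]; exact fun hcon => hm (hf hcon)
      have hd := hr _ (hmemim m) _ (hmemim m1) hgne
      have : Sum.inr i ∈ (g m : Set (M ⊕ ι)) := by
        have h3 : Sum.inr i ∈ (g m : Set (M ⊕ ι)) ∩ (g m1 : Set (M ⊕ ι)) := hd ▸ hrinr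
        exact h3.1
      rw [hgu] at this
      rcases this with h1 | h1
      · exact absurd h1 (by simp)
      · simp only [Set.mem_singleton_iff, Sum.inr.injEq] at h1
        exact h1.symm
  refine ⟨i, (e0.inducedStructureEquiv.symm.toEmbedding.comp g), ?_⟩
  rintro _ ⟨m, rfl⟩
  have : (e0.inducedStructureEquiv.symm.toEmbedding.comp g) m = u m := rfl
  rw [this]
  rw [← hall m]
  exact hcmem (u m)

end StructuredSunflowers
end

section
/- An infinite structure M is strongly sunflowerable if and only if M is sunflowerable and uncountable. -/
open FirstOrder Cardinal

universe u v w x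

namespace StructuredSunflowers

variable (L : FirstOrder.Language.{u, v})

/-- Pulling back a structured sunflower on a copy `Set.range h` (with the induced structure)
to a self-embedding of `M`. -/
lemma key {L : FirstOrder.Language.{u, v}} {M : Type w} [L.Structure M] {β : Type w}
    (h : M → Set β) (hinj : Function.Injective h)
    (H : ∃ g' : @FirstOrder.Language.Embedding L M ↥(Set.range h) _
          ((Equiv.ofInjective h hinj).inducedStructure),
        IsSunflower ((fun z : ↥(Set.range h) => (z : Set β)) ''
          Set.range (@DFunLike.coe _ _ _
            (@FirstOrder.Language.Embedding.funLike L M ↥(Set.range h) _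
              ((Equiv.ofInjective h hinj).inducedStructure)) g'))) :
    ∃ g : M ↪[L] M, IsSunflower (Set.range (h ∘ ⇑g)) := by
  letI S : L.Structure ↥(Set.range h) := (Equiv.ofInjective h hinj).inducedStructure
  obtain ⟨g', hg'⟩ := H
  set ε : M ≃[L] ↥(Set.range h) :=
    Equiv.inducedStructureEquiv (Equiv.ofInjective h hinj) with hε
  refine ⟨(ε.symm.toEmbedding).comp g', ?_⟩
  have hfun : h ∘ ⇑((ε.symm.toEmbedding).comp g')
      = (fun z : ↥(Set.range h) => (z : Set β)) ∘ ⇑g' := by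
    funext m
    show h ((Equiv.ofInjective h hinj).symm (g' m)) = ((g' m : ↥(Set.range h)) : Set β)
    exact Equiv.apply_ofInjective_symm hinj (g' m)
  have hrange : Set.range (h ∘ ⇑((ε.symm.toEmbedding).comp g'))
      = (fun z : ↥(Set.range h) => (z : Set β)) '' Set.range ⇑g' := by
    rw [hfun, Set.range_comp]
  rw [hrange]
  exact hg'

/-- A sunflowerable uncountable structure can be embedded into a single fiber of any
map to `ℕ`. -/
lemma exists_level {L : FirstOrder.Language.{u, v}} {M : Type w} [L.Structure M] [Infinite M]
    [Uncountable M] (hs : Sunflowerable.{u, v, w, w} L M) (P : M → ℕ) :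
    ∃ n : ℕ, ∃ g : M ↪[L] M, ∀ m : M, P (g m) = n := by
  classical
  set β := M ⊕ ULift.{w} ℕ with hβ
  set h : M → Set β := fun m => {Sum.inl m, Sum.inr ⟨P m⟩} with hh
  have hinj : Function.Injective h := by
    intro m m' hmm
    have : (Sum.inl m : β) ∈ h m' := by
      rw [← hmm]; exact Set.mem_insert _ _
    rcases this with h1 | h1
    · exact Sum.inl.inj h1
    · exact absurd h1 (by simp)
  have hsz : ∀ p ∈ Set.range h, p.Finite ∧ p.ncard = 2 := by
    rintro p ⟨m, rfl⟩
    refine ⟨(Set.finite_singleton _).insert _, Set.ncard_pair (by simp)⟩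
  obtain ⟨g, r, hr⟩ := key (L := L) h hinj
    (hs 2 β (Set.range h) ((Equiv.ofInjective h hinj).inducedStructure) hsz
      ⟨Equiv.inducedStructureEquiv (Equiv.ofInjective h hinj)⟩)
  have hmem : ∀ m : M, h (g m) ∈ Set.range (h ∘ ⇑g) := fun m => ⟨m, rfl⟩
  have hcore : ∀ m m' : M, m ≠ m' → h (g m) ∩ h (g m') = r := by
    intro m m' hne
    exact hr _ (hmem m) _ (hmem m') (fun hc => hne (g.injective (hinj hc)))
  obtain ⟨m0, m1, hne01⟩ := exists_pair_ne M
  by_cases hk : ∃ k : ULift.{w} ℕ, Sum.inr k ∈ r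
  · obtain ⟨k, hk⟩ := hk
    refine ⟨k.down, g, fun m => ?_⟩
    have hmm : (Sum.inr k : β) ∈ h (g m) := by
      by_cases hm0 : m = m0
      · subst hm0
        have := hcore m m1 hne01
        rw [← this] at hk
        exact hk.1
      · have := hcore m m0 hm0
        rw [← this] at hk
        exact hk.1
    rcases hmm with h1 | h1
    · exact absurd h1 (by simp)
    · have : k = (⟨P (g m)⟩ : ULift.{w} ℕ) := Sum.inr.inj h1
      rw [this]
  · exfalso
    have hPinj : Function.Injective (fun m => P (g m)) := by
      intro m m' hmm
      by_contra hne
      apply hk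
      refine ⟨⟨P (g m)⟩, ?_⟩
      rw [← hcore m m' hne]
      constructor
      · exact Set.mem_insert_iff.2 (Or.inr (by simp))
      · exact Set.mem_insert_iff.2 (Or.inr (by simp [hmm]))
    exact not_countable hPinj.countable

/-- An infinite structure is strongly sunflowerable iff it is sunflowerable and
uncountable. -/
theorem stronglySunflowerable_iff (L : FirstOrder.Language.{u, v}) (M : Type w) [L.Structure M]
    [Infinite M] :
    StronglySunflowerable.{u, v, w, w} L M ↔
      (Sunflowerable.{u, v, w, w} L M ∧ Uncountable M) := by
  constructor
  · intro hss
    constructor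
    · intro n β Y S hsz hne
      exact hss β Y S (fun p hp => (hsz p hp).1) hne
    · -- uncountability: ω has no 3-element sunflower of initial segments
      by_contra hunc
      have : Countable M := not_uncountable_iff.mp hunc
      obtain ⟨d⟩ := nonempty_denumerable M
      set e : M ≃ ℕ := Denumerable.eqv M with he
      set h : M → Set (ULift.{w} ℕ) := fun m => ULift.up '' Set.Iic (e m) with hh
      have hinj : Function.Injective h := by
        intro m m' hmm
        apply e.injective
        exact Set.Iic_injective
          ((Set.image_injective.2 ULift.up_injective) hmm)
      have hfin : ∀ p ∈ Set.range h, p.Finite := by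
        rintro p ⟨m, rfl⟩
        exact (Set.finite_Iic _).image _
      obtain ⟨g, r, hr⟩ := key (L := L) h hinj
        (hss (ULift.{w} ℕ) (Set.range h) ((Equiv.ofInjective h hinj).inducedStructure) hfin
          ⟨Equiv.inducedStructureEquiv (Equiv.ofInjective h hinj)⟩)
      set f := Infinite.natEmbedding M with hf
      set a : ℕ → ℕ := fun i => e (g (f i)) with ha
      have hainj : Function.Injective a :=
        e.injective.comp (g.injective.comp f.injective)
      have hmem : ∀ i : ℕ, h (g (f i)) ∈ Set.range (h ∘ ⇑g) := fun i => ⟨f i, rfl⟩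
      have hmin : ∀ i j : ℕ, i ≠ j →
          ULift.up '' Set.Iic (min (a i) (a j)) = r := by
        intro i j hij
        have hne : h (g (f i)) ≠ h (g (f j)) := fun hc =>
          hij (f.injective (g.injective (hinj hc)))
        have := hr _ (hmem i) _ (hmem j) hne
        rw [← this, hh]
        rw [← Set.image_inter ULift.up_injective, Set.Iic_inter_Iic]
      have hm : ∀ x y : ℕ, ULift.up '' Set.Iic x = ULift.up '' Set.Iic y → x = y :=
        fun x y hxy =>
          Set.Iic_injective ((Set.image_injective.2 ULift.up_injective) hxy)
      have h01 : min (a 0) (a 1) = min (a 0) (a 2) :=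
        hm _ _ ((hmin 0 1 (by omega)).trans (hmin 0 2 (by omega)).symm)
      have h12 : min (a 0) (a 1) = min (a 1) (a 2) :=
        hm _ _ ((hmin 0 1 (by omega)).trans (hmin 1 2 (by omega)).symm)
      have ha01 : a 0 ≠ a 1 := fun hc => absurd (hainj hc) (by omega)
      have ha02 : a 0 ≠ a 2 := fun hc => absurd (hainj hc) (by omega)
      have ha12 : a 1 ≠ a 2 := fun hc => absurd (hainj hc) (by omega)
      omega
  · rintro ⟨hs, hunc⟩
    intro β Y S hfin hne
    obtain ⟨e⟩ := hne
    obtain ⟨n, g0, hg0⟩ := exists_level hs (fun m => ((e m : Set β)).ncard)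
    set h : M → Set β := fun m => (e (g0 m) : Set β) with hh
    have hinj : Function.Injective h := fun m m' hmm =>
      g0.injective (e.injective (Subtype.val_injective hmm))
    have hsz : ∀ p ∈ Set.range h, p.Finite ∧ p.ncard = n := by
      rintro p ⟨m, rfl⟩
      exact ⟨hfin _ (e (g0 m)).2, hg0 m⟩
    obtain ⟨g, hg⟩ := key (L := L) h hinj
      (hs n β (Set.range h) ((Equiv.ofInjective h hinj).inducedStructure) hsz
        ⟨Equiv.inducedStructureEquiv (Equiv.ofInjective h hinj)⟩)
    refine ⟨e.toEmbedding.comp (g0.comp g), ?_⟩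
    have : (fun z : Y => (z : Set β)) '' Set.range ⇑(e.toEmbedding.comp (g0.comp g))
        = Set.range (h ∘ ⇑g) := by
      rw [← Set.range_comp]
      rfl
    rw [this]
    exact hg

end StructuredSunflowers
end

section
/- Suppose M is an infinite L-structure with universal duplication of ω-quantifier-free types, and f is an n-ary function symbol of L. Then for all a₀,...,a_{n−1} ∈ M, f^M(a₀,...,a_{n−1}) ∈ {a₀,...,a_{n−1}}; that is, every function of M is a choice function. -/
open FirstOrder Cardinal

universe u v w x

namespace StructuredSunflowers

variable (L : FirstOrder.Language.{u, v})

/-- In an infinite structure with universal duplication of ω-quantifier-free types,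
every function is a choice function. -/
theorem funMap_mem_range_of_univDupQF (L : FirstOrder.Language.{u, v}) (M : Type w) [L.Structure M]
    [Infinite M] (h : UnivDupQF L M) (n : ℕ) (f : L.Functions n) (a : Fin n → M) :
    Language.Structure.funMap f a ∈ Set.range a := by
  by_contra hx
  obtain ⟨g, hg⟩ := h n a _ hx
  have key : ∀ m : M, g m = Language.Structure.funMap f a := by
    intro m
    have hm := hg (Set.mem_range_self m)
    have hφ := hm (Language.Term.equal
        (Language.Term.func f (fun i => Language.Term.var (Sum.inl i)))
        (Language.Term.var (Sum.inr ())))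
      (Language.BoundedFormula.IsAtomic.equal _ _).isQF
    simp only [Language.Formula.realize_equal, Language.Term.realize_func,
      Language.Term.realize_var, Sum.elim_inl, Sum.elim_inr] at hφ
    exact (hφ.mp trivial).symm
  obtain ⟨m₁, m₂, hne⟩ := exists_pair_ne M
  exact hne (g.injective ((key m₁).trans (key m₂).symm))

end StructuredSunflowers
end

section
/- Suppose M is an L-structure whose cardinality |M| is an infinite regular cardinal, and M is indivisible, ultrahomogeneous, and has universal duplication of quantifier-free types. Then M is sunflowerable: for every n ∈ ω, every isomorphic copy of M whose underlying set consists of n-element sets contains a substructure isomorphic to M whose underlying set is a sunflower. -/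
open FirstOrder Cardinal

universe u v w x

namespace StructuredSunflowers

variable (L : FirstOrder.Language.{u, v})

/-! ### Auxiliary machinery for the proof -/

section AuxLemmas

open FirstOrder.Language FirstOrder.Language.Structure

variable {L' : FirstOrder.Language.{u, v}} {M : Type w} [L'.Structure M]

theorem isQF_relabelFormula {α γ : Type*} {φ : L'.Formula α} (h : φ.IsQF) (f : α → γ) :
    (φ.relabel f).IsQF := h.relabel _

theorem sqft_refl {ι : Type*} (a : ι → M) : SameQFType L' a a := fun _ _ => Iff.rfl

theorem sqft_comp {ι ι' : Type*} {a b : ι → M} (h : SameQFType L' a b) (f : ι' → ι) :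
    SameQFType L' (a ∘ f) (b ∘ f) := by
  intro φ hφ
  have h' := h (φ.relabel f) (isQF_relabelFormula hφ f)
  rwa [Formula.realize_relabel, Formula.realize_relabel] at h'

theorem isQF_restrictFreeVar {α β' : Type*} [DecidableEq α] {n : ℕ} {φ : L'.BoundedFormula α n}
    (h : φ.IsQF) : ∀ (f : φ.freeVarFinset → β'), (φ.restrictFreeVar f).IsQF := by
  induction h with
  | falsum => intro f; exact BoundedFormula.isQF_bot
  | of_isAtomic h' =>
    intro f
    cases h' with
    | equal t₁ t₂ => exact (BoundedFormula.IsAtomic.equal _ _).isQF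
    | rel R ts => exact (BoundedFormula.IsAtomic.rel _ _).isQF
  | imp h₁ h₂ ih₁ ih₂ => intro f; exact BoundedFormula.IsQF.imp (ih₁ _) (ih₂ _)

theorem sqft_of_fin {ι : Type*} {a b : ι → M}
    (h : ∀ (k : ℕ) (t : Fin k → ι), SameQFType L' (a ∘ t) (b ∘ t)) :
    SameQFType L' a b := by
  classical
  intro φ hφ
  have hsub : ↑φ.freeVarFinset ⊆ ((φ.freeVarFinset : Finset ι) : Set ι) := subset_rfl
  have key : ∀ c : ι → M, φ.Realize c ↔
      (Formula.relabel
        (fun x : ((φ.freeVarFinset : Finset ι) : Set ι) => φ.freeVarFinset.equivFin ⟨x.1, x.2⟩)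
        (φ.restrictFreeVar (Set.inclusion hsub))).Realize
        (c ∘ fun i => (φ.freeVarFinset.equivFin.symm i).1) := by
    intro c
    rw [Formula.realize_relabel]
    have hcomp : ((c ∘ fun i => (φ.freeVarFinset.equivFin.symm i).1) ∘
        fun x : ((φ.freeVarFinset : Finset ι) : Set ι) => φ.freeVarFinset.equivFin ⟨x.1, x.2⟩)
        = c ∘ Subtype.val := by
      funext x; simp
    rw [hcomp]
    exact (BoundedFormula.realize_restrictFreeVar' hsub (v := c) (xs := default)).symm
  rw [key a, key b]
  exact h _ _ _ (isQF_relabelFormula (isQF_restrictFreeVar hφ _) _)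

theorem exists_embedding_of_sqft (g : M → M)
    (h : ∀ (k : ℕ) (t : Fin k → M), SameQFType L' t (g ∘ t)) :
    ∃ e : M ↪[L'] M, ∀ x, e x = g x := by
  have hinj : Function.Injective g := by
    intro x y hxy
    have h2 := h 2 ![x, y] (Term.equal (Term.var 0) (Term.var 1))
      ((BoundedFormula.IsAtomic.equal _ _).isQF)
    simp only [Formula.realize_equal, Term.realize_var, Function.comp_apply,
      Matrix.cons_val_zero, Matrix.cons_val_one, Matrix.head_cons] at h2
    exact h2.mpr hxy
  have hfun : ∀ {k : ℕ} (f : L'.Functions k) (xs : Fin k → M),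
      g (funMap f xs) = funMap f (g ∘ xs) := by
    intro k f xs
    have h2 := h (k+1) (Fin.snoc xs (funMap f xs))
      (Term.equal (Term.func f (fun i => Term.var i.castSucc)) (Term.var (Fin.last k)))
      ((BoundedFormula.IsAtomic.equal _ _).isQF)
    simp only [Formula.realize_equal, Term.realize_func, Term.realize_var,
      Function.comp_apply, Fin.snoc_castSucc, Fin.snoc_last] at h2
    exact (h2.mp trivial).symm
  have hrel : ∀ {k : ℕ} (r : L'.Relations k) (xs : Fin k → M),
      RelMap r (g ∘ xs) ↔ RelMap r xs := by
    intro k r xs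
    have h2 := h k xs (r.formula Term.var) ((BoundedFormula.IsAtomic.rel _ _).isQF)
    simp only [Formula.realize_rel, Term.realize_var, Function.comp_apply] at h2
    exact Iff.symm h2
  exact ⟨⟨⟨g, hinj⟩, fun {k} f xs => hfun f xs, fun {k} r xs => hrel r xs⟩, fun x => rfl⟩

theorem card_Iio_lt' (w : (#M).ord.ToType) : #{v : (#M).ord.ToType // v < w} < #M := by
  haveI : IsWellOrder (#M).ord.ToType (· < ·) := isWellOrder_lt
  have h1 : #{v : (#M).ord.ToType // v < w} =
      (Ordinal.typein (α := (#M).ord.ToType) (· < ·) w).card := Ordinal.card_typein w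
  rw [h1]
  exact Cardinal.lt_ord.mp (Ordinal.typein_lt_self w)

theorem mk_iUnion_lt_of_finite {β : Type w} {ι : Type w} {κ : Cardinal.{w}} (hκ : ℵ₀ ≤ κ)
    (hι : #ι < κ) {s : ι → Set β} (hs : ∀ i, (s i).Finite) : #(⋃ i, s i) < κ := by
  rcases lt_or_ge #ι ℵ₀ with h | h
  · haveI : Finite ι := Cardinal.lt_aleph0_iff_finite.mp h
    exact lt_of_lt_of_le (Set.Finite.lt_aleph0 (Set.finite_iUnion hs)) hκ
  · haveI : Nonempty ι := Cardinal.mk_ne_zero_iff.mp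
      (ne_of_gt (lt_of_lt_of_le Cardinal.aleph0_pos h))
    calc #(⋃ i, s i) ≤ #ι * ⨆ i, #(s i) := Cardinal.mk_iUnion_le _
      _ ≤ #ι * ℵ₀ := mul_le_mul_right (ciSup_le' fun i => (hs i).lt_aleph0.le) _
      _ = #ι := Cardinal.mul_aleph0_eq h
      _ < κ := hι

theorem add_one_lt_of_aleph0_le {a κ : Cardinal.{w}} (hκ : ℵ₀ ≤ κ) (h : a < κ) : a + 1 < κ := by
  rcases lt_or_ge a ℵ₀ with ha | ha
  · exact lt_of_lt_of_le (Cardinal.add_lt_aleph0 ha Cardinal.one_lt_aleph0) hκ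
  · rwa [Cardinal.add_one_eq ha]

end AuxLemmas

section Construction

open FirstOrder.Language FirstOrder.Language.Structure

variable (L : FirstOrder.Language.{u, v}) {M : Type w} [L.Structure M] {β : Type w}

/-- The property required at each step of the transfinite construction of a pairwise
disjoint copy. -/
def GoodStep (z : (#M).ord.ToType → M) (F : M → Set β)
    (w : (#M).ord.ToType) (prev : {v : (#M).ord.ToType // v < w} → M) (y : M) : Prop :=
  SameQFTypeExt L (fun v : {v : (#M).ord.ToType // v < w} => z v.1) prev (z w) y ∧
    ∀ v : {v : (#M).ord.ToType // v < w}, F (prev v) ∩ F y = ∅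

/-- The transfinite sequence realizing a pairwise-disjoint copy of `M`. -/
noncomputable def seq [Nonempty M] (z : (#M).ord.ToType → M) (F : M → Set β) :
    (#M).ord.ToType → M :=
  WellFounded.fix wellFounded_lt
    (fun w prev =>
      letI := Classical.propDecidable
        (∃ y, GoodStep L z F w (fun v : {v // v < w} => prev v.1 v.2) y)
      if h : ∃ y, GoodStep L z F w (fun v : {v // v < w} => prev v.1 v.2) y then h.choose
      else Classical.arbitrary M)

theorem seq_spec [Nonempty M] (z : (#M).ord.ToType → M) (F : M → Set β)
    (w : (#M).ord.ToType)
    (hex : ∃ y, GoodStep L z F w (fun v : {v // v < w} => seq L z F v.1) y) :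
    GoodStep L z F w (fun v : {v // v < w} => seq L z F v.1) (seq L z F w) := by
  letI := Classical.propDecidable
    (∃ y, GoodStep L z F w (fun v : {v // v < w} => seq L z F v.1) y)
  have heq : seq L z F w =
      if h : ∃ y, GoodStep L z F w (fun v : {v // v < w} => seq L z F v.1) y then h.choose
      else Classical.arbitrary M := WellFounded.fix_eq _ _ _
  rw [heq, dif_pos hex]
  exact hex.choose_spec

end Construction


section MainProof

open FirstOrder.Language FirstOrder.Language.Structure

variable {M : Type w} [L.Structure M]

theorem exists_disjoint_copy (hreg : (#M).IsRegular) (hind : Indivisible L M)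
    (hu : UltraHomog L M) (hdup : UnivDupQFAt L M (#M)) {β : Type w} (F : M → Set β)
    (hfin : ∀ x, (F x).Finite)
    (hno : ∀ b : β, ¬ ∃ g : M ↪[L] M, ∀ x, b ∈ F (g x)) :
    ∃ g : M ↪[L] M, ∀ x y : M, x ≠ y → F (g x) ∩ F (g y) = ∅ := by
  classical
  have haleph : ℵ₀ ≤ #M := hreg.aleph0_le
  haveI : Nonempty M := Cardinal.mk_ne_zero_iff.mp
    (ne_of_gt (lt_of_lt_of_le Cardinal.aleph0_pos haleph))
  obtain ⟨z⟩ : Nonempty ((#M).ord.ToType ≃ M) := Cardinal.eq.mp (Cardinal.mk_ord_toType #M)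
  set m : (#M).ord.ToType → M := seq L (⇑z) F with hmdef
  have tuple_lemma : ∀ (k : ℕ) (tw : Fin k → (#M).ord.ToType),
      (∀ i, GoodStep L (⇑z) F (tw i) (fun v => m v.1) (m (tw i))) →
      SameQFType L (fun i => z (tw i)) (fun i => m (tw i)) := by
    intro k tw hG
    rcases isEmpty_or_nonempty (Fin k) with hk | hk
    · have h0 : (fun i => z (tw i)) = (fun i => m (tw i)) := funext fun i => (hk.false i).elim
      rw [h0]
      exact sqft_refl _
    · obtain ⟨i₀, hi₀⟩ := Finite.exists_max tw
      have hGu := (hG i₀).1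
      have hsum : SameQFType L
          (Sum.elim (fun v : {v : (#M).ord.ToType // v < tw i₀} => z v.1) (fun _ : Unit => z (tw i₀)))
          (Sum.elim (fun v : {v : (#M).ord.ToType // v < tw i₀} => m v.1) (fun _ : Unit => m (tw i₀))) :=
        hGu
      have hj1 : (fun i => z (tw i)) =
          (Sum.elim (fun v : {v : (#M).ord.ToType // v < tw i₀} => z v.1) (fun _ : Unit => z (tw i₀))) ∘
            (fun i => if h : tw i < tw i₀ then Sum.inl ⟨tw i, h⟩ else Sum.inr ()) := by
        funext i
        by_cases h : tw i < tw i₀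
        · simp [h]
        · have hle : tw i = tw i₀ := le_antisymm (hi₀ i) (not_lt.mp h)
          simp [h, hle]
      have hj2 : (fun i => m (tw i)) =
          (Sum.elim (fun v : {v : (#M).ord.ToType // v < tw i₀} => m v.1) (fun _ : Unit => m (tw i₀))) ∘
            (fun i => if h : tw i < tw i₀ then Sum.inl ⟨tw i, h⟩ else Sum.inr ()) := by
        funext i
        by_cases h : tw i < tw i₀
        · simp [h]
        · have hle : tw i = tw i₀ := le_antisymm (hi₀ i) (not_lt.mp h)
          simp [h, hle]
      rw [hj1, hj2]
      exact sqft_comp hsum _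
  have main : ∀ w : (#M).ord.ToType, GoodStep L (⇑z) F w (fun v => m v.1) (m w) := by
    intro w
    refine (wellFounded_lt (α := (#M).ord.ToType)).induction
      (C := fun w => GoodStep L (⇑z) F w (fun v => m v.1) (m w)) w ?_
    intro w ih
    have hA : SameQFType L (fun v : {v : (#M).ord.ToType // v < w} => z v.1)
        (fun v => m v.1) := by
      apply sqft_of_fin
      intro k t
      exact tuple_lemma k (fun i => (t i).1) (fun i => ih (t i).1 (t i).2)
    have hcard' : #{v : (#M).ord.ToType // v < w} < #M := card_Iio_lt' w
    obtain ⟨y, hy⟩ := hu {v : (#M).ord.ToType // v < w} hcard'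
      (fun v => z v.1) (fun v => m v.1) hA (z w)
    have hynot : y ∉ Set.range (fun v : {v : (#M).ord.ToType // v < w} => m v.1) := by
      rintro ⟨v, hv⟩
      have hq := hy (Term.equal (Term.var (Sum.inl v)) (Term.var (Sum.inr ())))
        ((BoundedFormula.IsAtomic.equal _ _).isQF)
      simp only [Formula.realize_equal, Term.realize_var, Sum.elim_inl, Sum.elim_inr] at hq
      exact absurd (z.injective (hq.mpr hv)) (ne_of_lt v.2)
    obtain ⟨gd, hgd⟩ := hdup {v : (#M).ord.ToType // v < w} hcard' (fun v => m v.1) y hynot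
    have hUcard : #(⋃ v : {v : (#M).ord.ToType // v < w}, F (m v.1)) < #M :=
      mk_iUnion_lt_of_finite haleph hcard' (fun v => hfin _)
    set U : Set β := ⋃ v : {v : (#M).ord.ToType // v < w}, F (m v.1) with hUdef
    set c : M → Option ↥U := fun x =>
      if h : ∃ bb, bb ∈ F (gd x) ∩ U then some ⟨h.choose, h.choose_spec.2⟩ else none with hcdef
    have hOpt : #(Option ↥U) < #M := by
      rw [Cardinal.mk_option]
      exact add_one_lt_of_aleph0_le haleph hUcard
    obtain ⟨i, g₂, hg₂⟩ := hind (Option ↥U) (fun i => {x : M | c x = i}) hOpt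
      (fun x => ⟨c x, rfl, fun j hj => hj.symm⟩)
    apply seq_spec
    rcases i with _ | b
    · have hnone : ¬ ∃ bb, bb ∈ F (gd (g₂ (Classical.arbitrary M))) ∩ U := by
        intro hh
        have hcy : c (g₂ (Classical.arbitrary M)) = none := hg₂ (Set.mem_range_self _)
        simp only [hcdef] at hcy
        rw [dif_pos hh] at hcy
        exact absurd hcy (by simp)
      refine ⟨gd (g₂ (Classical.arbitrary M)), ?_, ?_⟩
      · intro φ hφ
        exact (hy φ hφ).trans (hgd (Set.mem_range_self _) φ hφ)
      · intro v
        apply Set.eq_empty_iff_forall_notMem.mpr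
        rintro bb ⟨hb1, hb2⟩
        exact hnone ⟨bb, hb2, Set.mem_iUnion.mpr ⟨v, hb1⟩⟩
    · exfalso
      apply hno b.1
      refine ⟨gd.comp g₂, fun x => ?_⟩
      have hcy : c (g₂ x) = some b := hg₂ (Set.mem_range_self _)
      simp only [hcdef] at hcy
      by_cases hh : ∃ bb, bb ∈ F (gd (g₂ x)) ∩ U
      · rw [dif_pos hh] at hcy
        have hb : hh.choose = (b : β) := congrArg Subtype.val (Option.some.inj hcy)
        have hmem := hh.choose_spec.1
        rw [hb] at hmem
        simpa using hmem
      · rw [dif_neg hh] at hcy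
        exact absurd hcy (by simp)
  have hpres : ∀ (k : ℕ) (t : Fin k → M), SameQFType L t ((fun x => m (z.symm x)) ∘ t) := by
    intro k t
    have h1 := tuple_lemma k (fun i => z.symm (t i)) (fun i => main _)
    have h2 : (fun i => z (z.symm (t i))) = t := funext fun i => z.apply_symm_apply _
    rw [h2] at h1
    exact h1
  obtain ⟨e, he⟩ := exists_embedding_of_sqft (fun x => m (z.symm x)) hpres
  refine ⟨e, fun x y hxy => ?_⟩
  rw [he x, he y]
  have hzs : z.symm x ≠ z.symm y := fun hh => hxy (by
    rw [← z.apply_symm_apply x, hh, z.apply_symm_apply])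
  rcases lt_or_gt_of_ne hzs with h | h
  · exact (main (z.symm y)).2 ⟨z.symm x, h⟩
  · have h3 := (main (z.symm x)).2 ⟨z.symm y, h⟩
    rw [Set.inter_comm] at h3
    exact h3

theorem sunflower_main_lemma (hreg : (#M).IsRegular) (hind : Indivisible L M)
    (hu : UltraHomog L M) (hdup : UnivDupQFAt L M (#M)) :
    ∀ (n : ℕ) {β : Type w} (F : M → Set β), (∀ x, (F x).Finite) → (∀ x, (F x).ncard ≤ n) →
    ∃ (g : M ↪[L] M) (r : Set β), ∀ x y : M, F (g x) ≠ F (g y) → F (g x) ∩ F (g y) = r := by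
  intro n
  induction n with
  | zero =>
    intro β F hfin hcard
    refine ⟨Embedding.refl L M, ∅, fun x y hxy => absurd ?_ hxy⟩
    have h0 : ∀ t : M, F t = ∅ := fun t => (Set.ncard_eq_zero (hfin t)).mp
      (Nat.le_zero.mp (hcard t))
    rw [h0, h0]
  | succ n ih =>
    intro β F hfin hcard
    by_cases hA : ∃ b : β, ∃ g₀ : M ↪[L] M, ∀ x, b ∈ F (g₀ x)
    · obtain ⟨b, g₀, hb⟩ := hA
      have hfin' : ∀ t : M, (F (g₀ t) \ {b}).Finite := fun t => (hfin _).diff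
      have hcard' : ∀ t : M, (F (g₀ t) \ {b}).ncard ≤ n := by
        intro t
        have h1 := Set.ncard_diff_singleton_lt_of_mem (hb t) (hfin _)
        have h2 := hcard (g₀ t)
        omega
      obtain ⟨g₁, r, hr⟩ := ih (fun t => F (g₀ t) \ {b}) hfin' hcard'
      have hins : ∀ t : M, F (g₀ t) = insert b (F (g₀ t) \ {b}) := by
        intro t
        rw [Set.insert_diff_singleton, Set.insert_eq_self.mpr (hb t)]
      refine ⟨g₀.comp g₁, insert b r, fun x y hxy => ?_⟩
      rw [Embedding.comp_apply, Embedding.comp_apply] at hxy ⊢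
      rw [hins (g₁ x), hins (g₁ y)] at hxy ⊢
      have hne : F (g₀ (g₁ x)) \ {b} ≠ F (g₀ (g₁ y)) \ {b} := fun hh => hxy (by rw [hh])
      rw [← Set.insert_inter_distrib, hr _ _ hne]
    · obtain ⟨g, hg⟩ := exists_disjoint_copy L hreg hind hu hdup F hfin
        (fun bb hbb => hA ⟨bb, hbb⟩)
      exact ⟨g, ∅, fun x y hxy => hg x y (fun hh => hxy (by rw [hh]))⟩

end MainProof


/-- An indivisible, ultrahomogeneous structure of infinite regular cardinality with
universal duplication of quantifier-free types is sunflowerable. -/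
theorem sunflowerable_of_indivisible_ultrahomog (L : FirstOrder.Language.{u, v}) (M : Type w)
    [L.Structure M] (hreg : (#M).IsRegular) (hind : Indivisible L M)
    (hu : UltraHomog L M) (hdup : UnivDupQFAt L M (#M)) :
    Sunflowerable.{u, v, w, w} L M := by
  intro n β Y iY hY hne
  obtain ⟨e⟩ := hne
  obtain ⟨g, r, hg⟩ := sunflower_main_lemma L hreg hind hu hdup n
    (fun x : M => ((e x : Y) : Set β))
    (fun x => (hY _ (e x).2).1) (fun x => le_of_eq (hY _ (e x).2).2)
  refine ⟨(e.toEmbedding).comp g, r, ?_⟩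
  rintro p ⟨yp, ⟨xp, rfl⟩, rfl⟩ q ⟨yq, ⟨xq, rfl⟩, rfl⟩ hpq
  simp only [FirstOrder.Language.Embedding.comp_apply,
    FirstOrder.Language.Equiv.coe_toEmbedding] at hpq ⊢
  exact hg xp xq hpq


end StructuredSunflowers
end

section
/- The generic K_n-free graph H_n (the countable ultrahomogeneous graph omitting complete subgraphs of size n, for n ≥ 3) does not have universal duplication of quantifier-free types: there exists a tuple a₀,...,a_{n−3} and an element a such that no subset of B_{a̅,a} = {b : qftp(a̅,a) = qftp(a̅,b)} induces a graph isomorphic to H_n. -/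
open FirstOrder Cardinal

universe u v w x

namespace StructuredSunflowers

variable (L : FirstOrder.Language.{u, v})

/-- The generic `Kₙ`-free (Henson) graph does not have universal duplication of
quantifier-free types. -/
theorem hensonGraph_not_univDupQF (n : ℕ) (hn : 3 ≤ n) (V : Type u) [Countable V]
    [Infinite V] (G : SimpleGraph V) (hfree : G.CliqueFree n)
    (hext : ∀ A B : Finset V, Disjoint A B →
      (∀ t : Finset V, t ⊆ A → ¬ G.IsNClique (n - 1) t) →
      ∃ v : V, v ∉ A ∧ v ∉ B ∧ (∀ a ∈ A, G.Adj v a) ∧ (∀ b ∈ B, ¬ G.Adj v b)) :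
    letI := G.structure
    ¬ UnivDupQF FirstOrder.Language.graph V := by
  letI := G.structure
  classical
  intro h
  -- Step 1: construct a clique of size n - 1
  obtain ⟨K, hKcard, hKclique⟩ : ∃ K : Finset V, K.card = n - 1 ∧ G.IsClique ↑K := by
    suffices hgen : ∀ k, k ≤ n - 1 → ∃ K : Finset V, K.card = k ∧ G.IsClique ↑K from
      hgen (n - 1) le_rfl
    intro k hk
    induction k with
    | zero => exact ⟨∅, rfl, by simp⟩
    | succ k ih =>
      obtain ⟨K, hc, hcl⟩ := ih (Nat.le_of_succ_le hk)
      have hno : ∀ t ⊆ K, ¬ G.IsNClique (n - 1) t := by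
        intro t ht hcl'
        have h1 := hcl'.2
        have h2 : t.card ≤ K.card := Finset.card_le_card ht
        omega
      obtain ⟨v, hv, -, hadj, -⟩ := hext K ∅ (Finset.disjoint_empty_right K) hno
      refine ⟨insert v K, ?_, ?_⟩
      · rw [Finset.card_insert_of_notMem hv, hc]
      · rw [Finset.coe_insert]
        exact hcl.insert fun b hb _ => hadj b hb
  -- Step 2: pick x ∈ K, let A = K.erase x
  have hKpos : 0 < K.card := by omega
  obtain ⟨x, hxK⟩ := Finset.card_pos.1 hKpos
  set A : Finset V := K.erase x with hA
  have hAcard : A.card = n - 2 := by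
    rw [hA, Finset.card_erase_of_mem hxK, hKcard]; omega
  have e := A.equivFinOfCardEq hAcard
  set a : Fin (n - 2) → V := fun i => ((e.symm i : A) : V) with ha
  have haA : ∀ i, a i ∈ A := fun i => (e.symm i).2
  have hrange : ∀ b ∈ A, ∃ i, a i = b := by
    intro b hb
    refine ⟨e ⟨b, hb⟩, ?_⟩
    simp [ha]
  have hxa : x ∉ Set.range a := by
    rintro ⟨i, hi⟩
    have hm := haA i
    rw [hi] at hm
    exact Finset.notMem_erase x K hm
  -- Step 3: apply universal duplication
  obtain ⟨g, hg⟩ := h (n - 2) a x hxa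
  -- every b in the range of g is adjacent to every a i
  have hadjall : ∀ b ∈ Set.range g, ∀ i, G.Adj (a i) b := by
    intro b hb i
    have hb' := hg hb
    have hqf : (Language.adj.formula₂ (Language.Term.var (Sum.inl i))
        (Language.Term.var (Sum.inr ()))).IsQF :=
      (Language.BoundedFormula.IsAtomic.rel _ _).isQF
    have := hb' _ hqf
    rw [Language.Formula.realize_rel₂, Language.Formula.realize_rel₂] at this
    have hax : G.Adj (a i) x := by
      refine hKclique (Finset.mem_of_mem_erase (haA i)) hxK ?_
      intro hax
      have hm := haA i
      rw [hax] at hm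
      exact Finset.notMem_erase x K hm
    exact this.1 hax
  -- Step 4: find an edge in G
  obtain ⟨v₀⟩ : Nonempty V := inferInstance
  have hno1 : ∀ t ⊆ ({v₀} : Finset V), ¬ G.IsNClique (n - 1) t := by
    intro t ht hcl'
    have h1 := hcl'.2
    have h2 : t.card ≤ ({v₀} : Finset V).card := Finset.card_le_card ht
    simp only [Finset.card_singleton] at h2
    omega
  obtain ⟨w, hw, -, hwadj, -⟩ := hext {v₀} ∅ (Finset.disjoint_empty_right _) hno1
  have hwv : G.Adj w v₀ := hwadj v₀ (Finset.mem_singleton_self v₀)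
  -- g preserves adjacency
  have hgadj : G.Adj (g w) (g v₀) := by
    have := (g.map_rel Language.adj ![w, v₀]).2 hwv
    exact this
  -- Step 5: build an n-clique
  have hgw : ∀ b ∈ A, G.Adj (g w) b := by
    intro b hb
    obtain ⟨i, rfl⟩ := hrange b hb
    exact (hadjall (g w) ⟨w, rfl⟩ i).symm
  have hgv : ∀ b ∈ A, G.Adj (g v₀) b := by
    intro b hb
    obtain ⟨i, rfl⟩ := hrange b hb
    exact (hadjall (g v₀) ⟨v₀, rfl⟩ i).symm
  have hAclique : G.IsClique ↑A := hKclique.subset (by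
    rw [hA]; exact_mod_cast Finset.erase_subset x K)
  have hgvA : g v₀ ∉ A := fun hmem => G.loopless.irrefl _ (hgv _ hmem)
  have hgwA : g w ∉ A := fun hmem => G.loopless.irrefl _ (hgw _ hmem)
  have hgwv : g w ≠ g v₀ := G.ne_of_adj hgadj
  have hclique2 : G.IsClique ↑(insert (g v₀) A) := by
    rw [Finset.coe_insert]
    exact hAclique.insert fun b hb _ => hgv b hb
  have hclique3 : G.IsClique ↑(insert (g w) (insert (g v₀) A)) := by
    rw [Finset.coe_insert]
    refine hclique2.insert fun b hb _ => ?_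
    rw [Finset.coe_insert] at hb
    rcases hb with rfl | hb
    · exact hgadj
    · exact hgw b hb
  have hnm : g w ∉ insert (g v₀) A := by
    simp only [Finset.mem_insert]
    rintro (h' | h')
    · exact hgwv h'
    · exact hgwA h'
  refine hfree (insert (g w) (insert (g v₀) A)) ⟨hclique3, ?_⟩
  rw [Finset.card_insert_of_notMem hnm, Finset.card_insert_of_notMem hgvA, hAcard]
  omega

end StructuredSunflowers
end

section
/- For every infinite cardinal κ, the class L_{∞,κ} (the closure of linear orders of size < κ under lexicographic sums indexed by linear orders of size < κ, by κ, and by κ*) equals the class of κ-scattered linear orders of size at most κ. In particular, every ordinal β < κ⁺ and its reverse β* belong to L_{∞,κ}. -/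
open Cardinal

universe u

namespace StructuredSunflowers

/-- A subset `s` of a linear order is κ-dense if it has at least two elements and between
any two distinct elements of `s` there are exactly κ elements of `s`. -/
def KDense (κ : Cardinal.{u}) {α : Type u} [LinearOrder α] (s : Set α) : Prop :=
  2 ≤ #s ∧ ∀ a ∈ s, ∀ b ∈ s, a < b → #{c : α | c ∈ s ∧ a < c ∧ c < b} = κ

/-- A linear order is κ-scattered if it has no κ-dense suborder. -/
def KScattered (κ : Cardinal.{u}) (α : Type u) [LinearOrder α] : Prop :=
  ¬ ∃ s : Set α, KDense κ s

/-- The class `L_{∞,κ}`: the closure of the linear orders of size `< κ` under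
lexicographic sums indexed by linear orders of size `< κ`, by `κ`, and by `κ*`
(up to isomorphism). -/
inductive InLClass (κ : Cardinal.{u}) : ∀ (α : Type u), LinearOrder α → Prop
  | small (α : Type u) (instα : LinearOrder α) (h : #α < κ) : InLClass κ α instα
  | sum (ι : Type u) (instι : LinearOrder ι) (A : ι → Type u)
      (instA : ∀ i, LinearOrder (A i))
      (hι : #ι < κ ∨ Nonempty (ι ≃o κ.ord.ToType) ∨ Nonempty (ι ≃o (κ.ord.ToType)ᵒᵈ))
      (hA : ∀ i, InLClass κ (A i) (instA i)) :
      InLClass κ (Σₗ i, A i) inferInstance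
  | iso (α : Type u) (instα : LinearOrder α) (β : Type u) (instβ : LinearOrder β)
      (h : InLClass κ α instα) (e : α ≃o β) : InLClass κ β instβ

/-- A linear order `X` is `n`-sunflowerable if every isomorphic copy of `X` whose
underlying set consists of sets of size `n` contains a suborder isomorphic to `X`
whose underlying set is a sunflower. -/
def OrderNSunflowerable (X : Type u) [LinearOrder X] (n : ℕ) : Prop :=
  ∀ (β : Type u) (Y : Set (Set β)) (_ : LinearOrder Y),
    (∀ p ∈ Y, p.Finite ∧ p.ncard = n) → Nonempty (X ≃o Y) →
    ∃ g : X ↪o Y, IsSunflower ((fun z : Y => (z : Set β)) '' Set.range g)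

/-- A linear order is sunflowerable if it is `n`-sunflowerable for every `n`. -/
def OrderSunflowerable (X : Type u) [LinearOrder X] : Prop :=
  ∀ n : ℕ, OrderNSunflowerable X n


section
variable {κ : Cardinal.{u}} {α β : Type u} [LinearOrder α] [LinearOrder β]

theorem kscattered_of_orderIso (e : α ≃o β) (h : KScattered κ α) : KScattered κ β := by
  rintro ⟨s, h2, hd⟩
  refine h ⟨e ⁻¹' s, ?_, ?_⟩
  · rw [show #(⇑e ⁻¹' s) = #s from
      Cardinal.mk_congr (Equiv.subtypeEquiv e.toEquiv (fun a => Iff.rfl))]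
    exact h2
  · intro a ha b hb hab
    have hcnt := hd (e a) ha (e b) hb (e.lt_iff_lt.2 hab)
    rw [← hcnt]
    refine Cardinal.mk_congr (Equiv.subtypeEquiv e.toEquiv (fun c => ?_))
    exact ⟨fun ⟨h1, h2', h3⟩ => ⟨h1, e.lt_iff_lt.2 h2', e.lt_iff_lt.2 h3⟩,
      fun ⟨h1, h2', h3⟩ => ⟨h1, e.lt_iff_lt.1 h2', e.lt_iff_lt.1 h3⟩⟩

theorem kscattered_dual (h : KScattered κ α) : KScattered κ αᵒᵈ := by
  rintro ⟨s, h2, hd⟩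
  refine h ⟨OrderDual.toDual ⁻¹' s, ?_, ?_⟩
  · rw [show #(⇑OrderDual.toDual ⁻¹' s) = #s from
      Cardinal.mk_congr (Equiv.subtypeEquiv OrderDual.toDual (fun a => Iff.rfl))]
    exact h2
  · intro a ha b hb hab
    have hcnt := hd (OrderDual.toDual b) hb (OrderDual.toDual a) ha hab
    rw [← hcnt]
    refine Cardinal.mk_congr (Equiv.subtypeEquiv OrderDual.toDual (fun c => ?_))
    exact ⟨fun ⟨h1, h2', h3⟩ => ⟨h1, h3, h2'⟩, fun ⟨h1, h2', h3⟩ => ⟨h1, h3, h2'⟩⟩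

theorem exists_lt_of_kdense {s : Set α} (h2 : 2 ≤ #s) :
    ∃ a ∈ s, ∃ b ∈ s, a < b := by
  obtain ⟨a, b, hab⟩ := Cardinal.two_le_iff.1 h2
  rcases lt_or_gt_of_ne (Subtype.coe_ne_coe.2 hab) with hlt | hlt
  · exact ⟨a, a.2, b, b.2, hlt⟩
  · exact ⟨b, b.2, a, a.2, hlt⟩

theorem kscattered_of_small (h : #α < κ) : KScattered κ α := by
  rintro ⟨s, h2, hd⟩
  obtain ⟨a, ha, b, hb, hlt⟩ := exists_lt_of_kdense h2
  have hcnt := hd a ha b hb hlt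
  have hle : κ ≤ #α := by rw [← hcnt]; exact Cardinal.mk_set_le _
  exact absurd hle (not_le.2 h)

theorem kscattered_of_wellFoundedLT (hκ : ℵ₀ ≤ κ) [WellFoundedLT α] : KScattered κ α := by
  rintro ⟨s, h2, hd⟩
  obtain ⟨a', ha', b', hb', hlt⟩ := exists_lt_of_kdense h2
  have hne : {t | t ∈ s ∧ a' < t}.Nonempty := ⟨b', hb', hlt⟩
  obtain ⟨m, hm, hmin⟩ := (wellFounded_lt (α := α)).has_min _ hne
  have hcount := hd a' ha' m hm.1 hm.2
  have hempty : {c : α | c ∈ s ∧ a' < c ∧ c < m} = ∅ := by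
    ext c
    simp only [Set.mem_setOf_eq, Set.mem_empty_iff_false, iff_false]
    rintro ⟨hcs, hac, hcm⟩
    exact hmin c ⟨hcs, hac⟩ hcm
  rw [hempty] at hcount
  simp only [Cardinal.mk_eq_zero] at hcount
  exact Cardinal.aleph0_ne_zero (le_antisymm (hcount ▸ hκ) (Cardinal.zero_le _))

end

section


variable {κ : Cardinal.{u}} {α : Type u} [LinearOrder α]

/-- Gluing an ordered family of pieces covering a set. -/
theorem glue {ι : Type u} [LinearOrder ι]
    (hι : #ι < κ ∨ Nonempty (ι ≃o κ.ord.ToType) ∨ Nonempty (ι ≃o (κ.ord.ToType)ᵒᵈ))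
    (f : ι → Set α)
    (hord : ∀ i j : ι, i < j → ∀ x ∈ f i, ∀ y ∈ f j, x < y)
    (hL : ∀ i, InLClass κ (f i) inferInstance)
    (s : Set α) (hcov : s = ⋃ i, f i) :
    InLClass κ s inferInstance := by
  have hsum : InLClass κ (Σₗ i, (f i : Type u)) inferInstance :=
    InLClass.sum ι inferInstance _ _ hι hL
  set F : (Σₗ i, (f i : Type u)) → s := fun p =>
    ⟨(p.2 : α), by rw [hcov]; exact Set.mem_iUnion.2 ⟨p.1, p.2.2⟩⟩ with hF
  have hmono : StrictMono F := by
    intro p q hpq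
    rcases Sigma.Lex.lt_def.1 hpq with h1 | ⟨h1, h2⟩
    · exact hord _ _ h1 _ p.2.2 _ q.2.2
    · show (p.2 : α) < (q.2 : α)
      obtain ⟨i, x⟩ := p
      obtain ⟨j, y⟩ := q
      cases h1
      exact h2
  have hsurj : Function.Surjective F := by
    rintro ⟨x, hx⟩
    rw [hcov] at hx
    obtain ⟨i, hi⟩ := Set.mem_iUnion.1 hx
    exact ⟨⟨i, ⟨x, hi⟩⟩, rfl⟩
  exact InLClass.iso _ _ _ _ hsum (StrictMono.orderIsoOfSurjective F hmono hsurj)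

end

section

variable (κ : Cardinal.{u}) {α : Type u} [LinearOrder α]

theorem mk_uliftBool : #(ULift.{u} Bool) = 2 := by
  simp [Cardinal.mk_uLift]

theorem glue2 (hκ : ℵ₀ ≤ κ) (s t : Set α)
    (hst : ∀ x ∈ s, ∀ y ∈ t, x < y)
    (hs : InLClass κ s inferInstance) (ht : InLClass κ t inferInstance)
    (u : Set α) (hu : u = s ∪ t) :
    InLClass κ u inferInstance := by
  refine glue (ι := ULift.{u} Bool) (Or.inl ?_) (fun i => bif i.down then t else s)
    ?_ ?_ u ?_
  · rw [mk_uliftBool]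
    exact lt_of_lt_of_le (Cardinal.nat_lt_aleph0 2) hκ
  · rintro ⟨i⟩ ⟨j⟩ hij x hx y hy
    have hij' : i < j := hij
    rw [Bool.lt_iff] at hij'
    obtain ⟨rfl, rfl⟩ := hij'
    exact hst x hx y hy
  · rintro ⟨i⟩
    cases i
    · exact hs
    · exact ht
  · rw [hu]
    ext x
    simp only [Set.mem_union, Set.mem_iUnion]
    constructor
    · rintro (hx | hx)
      · exact ⟨⟨false⟩, hx⟩
      · exact ⟨⟨true⟩, hx⟩
    · rintro ⟨⟨i⟩, hx⟩
      cases i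
      · exact Or.inl hx
      · exact Or.inr hx

end

section

theorem dualClosed {κ : Cardinal.{u}} {α : Type u} {instα : LinearOrder α}
    (h : InLClass κ α instα) :
    InLClass κ αᵒᵈ inferInstance := by
  induction h with
  | small α instα h => exact InLClass.small αᵒᵈ _ h
  | iso α instα β instβ h e ih => exact InLClass.iso _ _ _ _ ih e.dual
  | sum ι instι A instA hι hA ih =>
    have hι' : #(ιᵒᵈ) < κ ∨ Nonempty (ιᵒᵈ ≃o κ.ord.ToType) ∨
        Nonempty (ιᵒᵈ ≃o (κ.ord.ToType)ᵒᵈ) := by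
      rcases hι with h1 | ⟨⟨e⟩⟩ | ⟨⟨e⟩⟩
      · exact Or.inl h1
      · exact Or.inr (Or.inr ⟨e.dual⟩)
      · exact Or.inr (Or.inl ⟨e.dual.trans (OrderIso.dualDual _).symm⟩)
    set B : ιᵒᵈ → Type u := fun i => (A (OrderDual.ofDual i))ᵒᵈ with hB
    have hsum : InLClass κ (Σₗ i : ιᵒᵈ, B i) inferInstance :=
      InLClass.sum ιᵒᵈ inferInstance B (fun i => inferInstance)
        hι' (fun i => ih (OrderDual.ofDual i))
    set F : (Σₗ i : ιᵒᵈ, B i) → (Σₗ i, A i)ᵒᵈ := fun p =>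
      OrderDual.toDual (toLex ⟨OrderDual.ofDual p.1, OrderDual.ofDual p.2⟩) with hF
    have hmono : StrictMono F := by
      intro p q hpq
      show (toLex ⟨OrderDual.ofDual q.1, OrderDual.ofDual q.2⟩ : Σₗ i, A i) <
        toLex ⟨OrderDual.ofDual p.1, OrderDual.ofDual p.2⟩
      rcases Sigma.Lex.lt_def.1 hpq with h1 | ⟨h1, h2⟩
      · exact Sigma.Lex.lt_def.2 (Or.inl h1)
      · obtain ⟨i, x⟩ := p
        obtain ⟨j, y⟩ := q
        cases h1
        exact Sigma.Lex.lt_def.2 (Or.inr ⟨rfl, h2⟩)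
    have hsurj : Function.Surjective F := by
      intro x
      exact ⟨toLex ⟨OrderDual.toDual (ofLex (OrderDual.ofDual x)).1,
        OrderDual.toDual (ofLex (OrderDual.ofDual x)).2⟩, rfl⟩
    exact InLClass.iso _ _ _ _ hsum (StrictMono.orderIsoOfSurjective F hmono hsurj)

end

section

section Rel

variable {κ : Cardinal.{u}} {α : Type u} [LinearOrder α]

/-- `x` and `y` are related if every convex subset of the interval between them
is in the class. -/
def Rel (κ : Cardinal.{u}) {α : Type u} [LinearOrder α] (x y : α) : Prop :=
  ∀ s : Set α, s ⊆ Set.Icc (min x y) (max x y) → s.OrdConnected →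
    InLClass κ s inferInstance

theorem rel_refl (hκ : ℵ₀ ≤ κ) (x : α) : Rel κ x x := by
  intro s hs _
  refine InLClass.small _ _ (lt_of_le_of_lt ?_ (lt_of_lt_of_le Cardinal.one_lt_aleph0 hκ))
  simp only [min_self, max_self, Set.Icc_self] at hs
  calc #s ≤ #({x} : Set α) := Cardinal.mk_le_mk_of_subset hs
    _ = 1 := Cardinal.mk_singleton x

theorem rel_symm {x y : α} (h : Rel κ x y) : Rel κ y x := by
  intro s hs hc
  exact h s (by rwa [min_comm x y, max_comm x y]) hc

theorem rel_left {x y c : α} (h : Rel κ x y) (hxc : x ≤ c) (hcy : c ≤ y) : Rel κ x c := by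
  intro s hs hc
  rw [min_eq_left hxc, max_eq_right hxc] at hs
  refine h s ?_ hc
  rw [min_eq_left (hxc.trans hcy), max_eq_right (hxc.trans hcy)]
  exact hs.trans (Set.Icc_subset_Icc le_rfl hcy)

theorem rel_right {x y c : α} (h : Rel κ x y) (hxc : x ≤ c) (hcy : c ≤ y) : Rel κ c y := by
  intro s hs hc
  rw [min_eq_left hcy, max_eq_right hcy] at hs
  refine h s ?_ hc
  rw [min_eq_left (hxc.trans hcy), max_eq_right (hxc.trans hcy)]
  exact hs.trans (Set.Icc_subset_Icc hxc le_rfl)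

private theorem rel_trans_aux (hκ : ℵ₀ ≤ κ) {x y z : α} (hxz : x ≤ z)
    (h1 : Rel κ x y) (h2 : Rel κ y z) : Rel κ x z := by
  intro s hs hc
  rw [min_eq_left hxz, max_eq_right hxz] at hs
  rcases lt_or_ge y x with hyx | hxy
  · -- y < x : s ⊆ Icc x z ⊆ Icc y z
    refine h2 s ?_ hc
    rw [min_eq_left (hyx.le.trans hxz), max_eq_right (hyx.le.trans hxz)]
    exact hs.trans (Set.Icc_subset_Icc hyx.le le_rfl)
  · rcases lt_or_ge z y with hzy | hyz
    · -- z < y : s ⊆ Icc x z ⊆ Icc x y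
      refine h1 s ?_ hc
      rw [min_eq_left (hxz.trans hzy.le), max_eq_right (hxz.trans hzy.le)]
      exact hs.trans (Set.Icc_subset_Icc le_rfl hzy.le)
    · -- x ≤ y ≤ z : split s at y
      have hs1 : InLClass κ (s ∩ Set.Iic y : Set α) inferInstance := by
        refine h1 _ ?_ (hc.inter Set.ordConnected_Iic)
        rw [min_eq_left hxy, max_eq_right hxy]
        rintro c ⟨hcs, hcy⟩
        exact ⟨(hs hcs).1, hcy⟩
      have hs2 : InLClass κ (s ∩ Set.Ioi y : Set α) inferInstance := by
        refine h2 _ ?_ (hc.inter Set.ordConnected_Ioi)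
        rw [min_eq_left hyz, max_eq_right hyz]
        rintro c ⟨hcs, hcy⟩
        exact ⟨le_of_lt hcy, (hs hcs).2⟩
      refine glue2 κ hκ _ _ ?_ hs1 hs2 s ?_
      · rintro a ⟨_, ha⟩ b ⟨_, hb⟩
        exact lt_of_le_of_lt ha hb
      · ext c
        simp only [Set.mem_union, Set.mem_inter_iff, Set.mem_Iic, Set.mem_Ioi]
        constructor
        · intro hcs
          rcases le_or_gt c y with h | h
          · exact Or.inl ⟨hcs, h⟩
          · exact Or.inr ⟨hcs, h⟩
        · rintro (⟨h, _⟩ | ⟨h, _⟩) <;> exact h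

theorem rel_trans (hκ : ℵ₀ ≤ κ) {x y z : α} (h1 : Rel κ x y) (h2 : Rel κ y z) :
    Rel κ x z := by
  rcases le_total x z with hxz | hzx
  · exact rel_trans_aux hκ hxz h1 h2
  · exact rel_symm (rel_trans_aux hκ hzx (rel_symm h2) (rel_symm h1))

/-- Block comparability: points of distinct classes compare like the classes. -/
theorem rel_blocks (hκ : ℵ₀ ≤ κ) {x y c d : α} (hxy : ¬ Rel κ x y) (hlt : x < y)
    (hc : Rel κ x c) (hd : Rel κ y d) : c < d := by
  by_contra hcd
  push_neg at hcd
  rcases le_total x d with hxd | hdx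
  · -- x ≤ d ≤ c, so Rel x d by rel_left on Rel x c
    have hdc : Rel κ x d := rel_left hc hxd hcd
    exact hxy (rel_trans hκ hdc (rel_symm hd))
  · -- d ≤ x ≤ y with Rel d y gives Rel x y
    exact hxy (rel_right (rel_symm hd) hdx hlt.le)

end Rel
end

section

section Parts

variable {κ : Cardinal.{u}} {α : Type u} [LinearOrder α]

theorem inL_of_empty (hκ : ℵ₀ ≤ κ) (U : Set α) (h : ¬ U.Nonempty) :
    InLClass κ U inferInstance := by
  rw [Set.not_nonempty_iff_eq_empty] at h
  subst h
  refine InLClass.small _ _ ?_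
  rw [Cardinal.mk_emptyCollection]
  exact lt_of_lt_of_le Cardinal.aleph0_pos hκ

/-- Admissibility of a subtype of `o.ToType` as a sum index. -/
theorem index_admissible (hκ : ℵ₀ ≤ κ) {o : Ordinal.{u}} (ho : o ≤ κ.ord)
    (J : Set o.ToType) :
    #J < κ ∨ Nonempty (J ≃o κ.ord.ToType) ∨ Nonempty (J ≃o (κ.ord.ToType)ᵒᵈ) := by
  haveI hwo : IsWellOrder J (· < ·) := isWellOrder_lt
  set δ := Ordinal.type ((· < ·) : J → J → Prop) with hδ
  have hemb : ((· < ·) : J → J → Prop) ↪r ((· < ·) : o.ToType → o.ToType → Prop) :=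
    ⟨Function.Embedding.subtype _, Iff.rfl⟩
  haveI : IsWellOrder o.ToType ((· < ·) : o.ToType → o.ToType → Prop) := isWellOrder_lt
  have hδle : δ ≤ κ.ord := by
    refine le_trans (RelEmbedding.ordinal_type_le hemb) ?_
    rw [Ordinal.type_toType]
    exact ho
  rcases lt_or_eq_of_le hδle with hlt | heq
  · left
    have : δ.card = #J := Ordinal.card_type _
    rw [← this]
    exact Cardinal.lt_ord.1 hlt
  · right; left
    haveI : IsWellOrder κ.ord.ToType ((· < ·) : κ.ord.ToType → κ.ord.ToType → Prop) :=
      isWellOrder_lt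
    have : Nonempty (((· < ·) : J → J → Prop) ≃r ((· < ·) : κ.ord.ToType → _ → Prop)) := by
      rw [← Ordinal.type_eq]
      rw [Ordinal.type_toType]
      exact heq
    exact ⟨OrderIso.ofRelIsoLT this.some⟩

theorem upperPart (hκ : ℵ₀ ≤ κ) (hcard : #α ≤ κ) (x₀ : α) (U : Set α)
    (hc : U.OrdConnected) (hU : ∀ y ∈ U, x₀ ≤ y) (hrel : ∀ y ∈ U, Rel κ x₀ y) :
    InLClass κ U inferInstance := by
  by_cases hne : U.Nonempty
  swap
  · exact inL_of_empty hκ U hne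
  set o := (#U).ord with ho
  have hole : o ≤ κ.ord := Cardinal.ord_le_ord.2 ((Cardinal.mk_set_le U).trans hcard)
  have hmk : #o.ToType = #U := by rw [Cardinal.mk_toType, Cardinal.card_ord]
  obtain ⟨g⟩ : Nonempty (o.ToType ≃ U) := Cardinal.eq.1 hmk
  set val : o.ToType → α := fun i => (g i : α) with hval
  set J : Set o.ToType := {i | ∀ j, j < i → val j < val i} with hJ
  set f : J → Set α := fun i =>
    {t | t ∈ U ∧ t ≤ val i ∧ ∀ j ∈ J, j < i.1 → val j < t} with hf
  refine glue (index_admissible hκ hole J) f ?_ ?_ U ?_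
  · -- ordered pieces
    rintro ⟨i, hi⟩ ⟨i', hi'⟩ hii' x hx y hy
    have h1 : x ≤ val i := hx.2.1
    have h2 : val i < y := hy.2.2 i hi hii'
    exact lt_of_le_of_lt h1 h2
  · -- each piece is in the class
    rintro ⟨i, hi⟩
    have hvi : val i ∈ U := (g i).2
    have hx0 : x₀ ≤ val i := hU _ hvi
    refine hrel (val i) hvi (f ⟨i, hi⟩) ?_ ?_
    · rw [min_eq_left hx0, max_eq_right hx0]
      rintro t ⟨htU, htle, _⟩
      exact ⟨hU t htU, htle⟩
    · constructor
      rintro x ⟨hxU, hxle, hxgt⟩ y ⟨hyU, hyle, hygt⟩ c ⟨hc1, hc2⟩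
      refine ⟨hc.out hxU hyU ⟨hc1, hc2⟩, hc2.trans hyle, ?_⟩
      intro j hj hji
      exact lt_of_lt_of_le (hxgt j hj hji) hc1
  · -- cover
    ext t
    simp only [Set.mem_iUnion]
    constructor
    · intro ht
      have hWne : {i : o.ToType | t ≤ val i}.Nonempty := by
        refine ⟨g.symm ⟨t, ht⟩, ?_⟩
        show t ≤ val (g.symm ⟨t, ht⟩)
        simp only [hval, Equiv.apply_symm_apply, le_refl]
      obtain ⟨m, hm, hmin⟩ := (wellFounded_lt (α := o.ToType)).has_min _ hWne
      have hmJ : m ∈ J := by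
        intro j hj
        have : ¬ t ≤ val j := fun h => hmin j h hj
        exact lt_of_lt_of_le (not_le.1 this) hm
      refine ⟨⟨m, hmJ⟩, ht, hm, ?_⟩
      intro j _ hj
      exact not_le.1 (fun h => hmin j h hj)
    · rintro ⟨i, ht, _, _⟩
      exact ht

end Parts
end

section

section Parts2

variable {κ : Cardinal.{u}} {α : Type u} [LinearOrder α]

theorem admissible_dual {ι : Type u} [LinearOrder ι]
    (h : #ι < κ ∨ Nonempty (ι ≃o κ.ord.ToType) ∨ Nonempty (ι ≃o (κ.ord.ToType)ᵒᵈ)) :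
    #(ιᵒᵈ) < κ ∨ Nonempty (ιᵒᵈ ≃o κ.ord.ToType) ∨ Nonempty (ιᵒᵈ ≃o (κ.ord.ToType)ᵒᵈ) := by
  rcases h with h1 | ⟨⟨e⟩⟩ | ⟨⟨e⟩⟩
  · exact Or.inl h1
  · exact Or.inr (Or.inr ⟨e.dual⟩)
  · exact Or.inr (Or.inl ⟨e.dual.trans (OrderIso.dualDual _).symm⟩)

theorem lowerPart (hκ : ℵ₀ ≤ κ) (hcard : #α ≤ κ) (x₀ : α) (U : Set α)
    (hc : U.OrdConnected) (hU : ∀ y ∈ U, y ≤ x₀) (hrel : ∀ y ∈ U, Rel κ x₀ y) :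
    InLClass κ U inferInstance := by
  by_cases hne : U.Nonempty
  swap
  · exact inL_of_empty hκ U hne
  set o := (#U).ord with ho
  have hole : o ≤ κ.ord := Cardinal.ord_le_ord.2 ((Cardinal.mk_set_le U).trans hcard)
  have hmk : #o.ToType = #U := by rw [Cardinal.mk_toType, Cardinal.card_ord]
  obtain ⟨g⟩ : Nonempty (o.ToType ≃ U) := Cardinal.eq.1 hmk
  set val : o.ToType → α := fun i => (g i : α) with hval
  set J : Set o.ToType := {i | ∀ j, j < i → val i < val j} with hJ
  set f : (J : Type u)ᵒᵈ → Set α := fun i =>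
    {t | t ∈ U ∧ val (OrderDual.ofDual i).1 ≤ t ∧
      ∀ j ∈ J, j < (OrderDual.ofDual i).1 → t < val j} with hf
  refine glue (admissible_dual (index_admissible hκ hole J)) f ?_ ?_ U ?_
  · -- ordered pieces
    intro i i' hii' x hx y hy
    have hlt : ((OrderDual.ofDual i') : J).1 < ((OrderDual.ofDual i) : J).1 := hii'
    have h1 : x < val (OrderDual.ofDual i').1 :=
      hx.2.2 _ (OrderDual.ofDual i' : J).2 hlt
    exact lt_of_lt_of_le h1 hy.2.1
  · -- pieces in class
    intro i
    set i0 : J := OrderDual.ofDual i with hi0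
    have hvi : val i0.1 ∈ U := (g i0.1).2
    have hx0 : val i0.1 ≤ x₀ := hU _ hvi
    refine hrel (val i0.1) hvi (f i) ?_ ?_
    · rw [min_eq_right hx0, max_eq_left hx0]
      rintro t ⟨htU, htge, _⟩
      exact ⟨htge, hU t htU⟩
    · constructor
      rintro x ⟨hxU, hxge, hxlt⟩ y ⟨hyU, hyge, hylt⟩ c ⟨hc1, hc2⟩
      refine ⟨hc.out hxU hyU ⟨hc1, hc2⟩, hxge.trans hc1, ?_⟩
      intro j hj hji
      exact lt_of_le_of_lt hc2 (hylt j hj hji)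
  · -- cover
    ext t
    simp only [Set.mem_iUnion]
    constructor
    · intro ht
      have hWne : {i : o.ToType | val i ≤ t}.Nonempty := by
        refine ⟨g.symm ⟨t, ht⟩, ?_⟩
        show val (g.symm ⟨t, ht⟩) ≤ t
        simp only [hval, Equiv.apply_symm_apply, le_refl]
      obtain ⟨m, hm, hmin⟩ := (wellFounded_lt (α := o.ToType)).has_min _ hWne
      have hmJ : m ∈ J := by
        intro j hj
        have : ¬ val j ≤ t := fun h => hmin j h hj
        exact lt_of_le_of_lt hm (not_le.1 this)
      refine ⟨OrderDual.toDual (⟨m, hmJ⟩ : J), ht, hm, ?_⟩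
      intro j _ hj
      exact not_le.1 (fun h => hmin j h hj)
    · rintro ⟨i, ht, _, _⟩
      exact ht

end Parts2
end

section

variable {κ : Cardinal.{u}} {α : Type u} [LinearOrder α]

theorem classPiece (hκ : ℵ₀ ≤ κ) (hcard : #α ≤ κ) (w : α) (C : Set α)
    (hc : C.OrdConnected) (hrel : ∀ y ∈ C, Rel κ w y) :
    InLClass κ C inferInstance := by
  by_cases hne : C.Nonempty
  swap
  · exact inL_of_empty hκ C hne
  obtain ⟨c₀, hc₀⟩ := hne
  have hrel' : ∀ y ∈ C, Rel κ c₀ y := fun y hy =>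
    rel_trans hκ (rel_symm (hrel c₀ hc₀)) (hrel y hy)
  have hlow : InLClass κ (C ∩ Set.Iio c₀ : Set α) inferInstance := by
    refine lowerPart hκ hcard c₀ _ (hc.inter Set.ordConnected_Iio) ?_ ?_
    · rintro y ⟨_, hy⟩; exact le_of_lt hy
    · rintro y ⟨hy, _⟩; exact hrel' y hy
  have hup : InLClass κ (C ∩ Set.Ici c₀ : Set α) inferInstance := by
    refine upperPart hκ hcard c₀ _ (hc.inter Set.ordConnected_Ici) ?_ ?_
    · rintro y ⟨_, hy⟩; exact hy
    · rintro y ⟨hy, _⟩; exact hrel' y hy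
  refine glue2 κ hκ _ _ ?_ hlow hup C ?_
  · rintro x ⟨_, hx⟩ y ⟨_, hy⟩
    exact lt_of_lt_of_le hx hy
  · ext x
    simp only [Set.mem_union, Set.mem_inter_iff, Set.mem_Iio, Set.mem_Ici]
    constructor
    · intro hx
      rcases lt_or_ge x c₀ with h | h
      · exact Or.inl ⟨hx, h⟩
      · exact Or.inr ⟨hx, h⟩
    · rintro (⟨h, _⟩ | ⟨h, _⟩) <;> exact h

end

section

variable {κ : Cardinal.{u}} {α : Type u} [LinearOrder α]

theorem reverse_direction (hκ : ℵ₀ ≤ κ) (hsc : KScattered κ α) (hcard : #α ≤ κ) :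
    InLClass κ α inferInstance := by
  rcases isEmpty_or_nonempty α with hemp | hne
  · refine InLClass.small _ _ ?_
    rw [Cardinal.mk_eq_zero α]
    exact lt_of_lt_of_le Cardinal.aleph0_pos hκ
  obtain ⟨x₀⟩ := hne
  suffices hall : ∀ y z : α, Rel κ y z by
    have huniv := classPiece hκ hcard x₀ Set.univ Set.ordConnected_univ
      (fun y _ => hall x₀ y)
    exact InLClass.iso _ _ _ _ huniv OrderIso.Set.univ
  by_contra hcon
  push_neg at hcon
  obtain ⟨u, v, huv⟩ := hcon
  set S : Setoid α := ⟨Rel κ, ⟨fun x => rel_refl hκ x, rel_symm, rel_trans hκ⟩⟩ with hS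
  set r : α → α := fun x => (Quotient.mk S x).out with hr
  have hrx : ∀ x, Rel κ x (r x) := by
    intro x
    have : Quotient.mk S (r x) = Quotient.mk S x := Quotient.out_eq _
    exact rel_symm (Quotient.exact this)
  have hreq : ∀ x y, Rel κ x y → r x = r y := by
    intro x y h
    show (Quotient.mk S x).out = (Quotient.mk S y).out
    rw [Quotient.sound (a := x) (b := y) h]
  have hfix : ∀ x, r (r x) = r x := fun x => hreq _ _ (rel_symm (hrx x))
  set s : Set α := Set.range r with hs
  have hfix' : ∀ a ∈ s, r a = a := by
    rintro a ⟨x, rfl⟩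
    exact hfix x
  have hnotrel : ∀ a ∈ s, ∀ b ∈ s, a ≠ b → ¬ Rel κ a b := by
    intro a ha b hb hab hrel
    exact hab ((hfix' a ha).symm.trans ((hreq a b hrel).trans (hfix' b hb)))
  refine hsc ⟨s, ?_, ?_⟩
  · -- at least two elements
    rw [Cardinal.two_le_iff]
    refine ⟨⟨r u, Set.mem_range_self u⟩, ⟨r v, Set.mem_range_self v⟩, ?_⟩
    intro h
    have : r u = r v := congrArg Subtype.val h
    refine huv (rel_trans hκ (hrx u) ?_)
    rw [this]
    exact rel_symm (hrx v)
  · intro a ha b hb hab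
    have hnab : ¬ Rel κ a b := hnotrel a ha b hb (ne_of_lt hab)
    refine le_antisymm ((Cardinal.mk_set_le _).trans hcard) ?_
    by_contra hlt
    push_neg at hlt
    refine hnab ?_
    -- show Rel a b from smallness of the between set
    intro t ht hconv
    rw [min_eq_left hab.le, max_eq_right hab.le] at ht
    -- the pieces
    set f : (r '' t : Set α) → Set α := fun w => {x | x ∈ t ∧ r x = w.1} with hf
    have hwfix : ∀ w : (r '' t : Set α), r w.1 = w.1 := by
      rintro ⟨w, ⟨x, _, rfl⟩⟩
      exact hfix x
    have hrelw : ∀ w : (r '' t : Set α), ∀ x ∈ f w, Rel κ w.1 x := by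
      rintro w x ⟨hxt, hxr⟩
      rw [← hxr]
      exact rel_symm (hrx x)
    refine glue (Or.inl ?_) f ?_ ?_ t ?_
    · -- cardinality of the index
      have hsub : (r '' t : Set α) ⊆
          insert a (insert b {c : α | c ∈ s ∧ a < c ∧ c < b}) := by
        rintro w ⟨x, hxt, rfl⟩
        obtain ⟨hax, hxb⟩ := ht hxt
        by_cases hxa : Rel κ x a
        · left; rw [hreq x a hxa]; exact hfix' a ha
        by_cases hxbr : Rel κ x b
        · right; left; rw [hreq x b hxbr]; exact hfix' b hb
        have hax' : a < x := lt_of_le_of_ne hax (fun h => hxa (h ▸ rel_refl hκ x))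
        have hxb' : x < b := lt_of_le_of_ne hxb (fun h => hxbr (h ▸ rel_refl hκ x))
        right; right
        refine ⟨Set.mem_range_self x, ?_, ?_⟩
        · by_contra hle
          push_neg at hle
          exact hxa (rel_symm (rel_right (rel_symm (hrx x)) hle hax'.le))
        · by_contra hle
          push_neg at hle
          exact hxbr (rel_left (hrx x) hxb'.le hle)
      calc #(r '' t : Set α)
          ≤ #(insert a (insert b {c : α | c ∈ s ∧ a < c ∧ c < b}) : Set α) :=
            Cardinal.mk_le_mk_of_subset hsub
        _ ≤ #(insert b {c : α | c ∈ s ∧ a < c ∧ c < b} : Set α) + 1 :=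
            Cardinal.mk_insert_le
        _ ≤ (#{c : α | c ∈ s ∧ a < c ∧ c < b} + 1) + 1 := by
            exact add_le_add_left Cardinal.mk_insert_le 1
        _ < κ := by
            have h1 : (1 : Cardinal) < κ := lt_of_lt_of_le Cardinal.one_lt_aleph0 hκ
            exact Cardinal.add_lt_of_lt hκ (Cardinal.add_lt_of_lt hκ hlt h1) h1
    · -- ordered pieces
      rintro w w' hww' x hx y hy
      refine rel_blocks hκ ?_ hww' ?_ ?_
      · intro h
        have : w.1 = w'.1 := by
          rw [← hwfix w, ← hwfix w']
          exact hreq _ _ h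
        exact (ne_of_lt hww') (Subtype.ext this)
      · exact hrelw w x hx
      · exact hrelw w' y hy
    · -- pieces in the class
      intro w
      refine classPiece hκ hcard w.1 (f w) ?_ (hrelw w)
      constructor
      rintro x ⟨hxt, hxr⟩ y ⟨hyt, hyr⟩ c hcm
      refine ⟨hconv.out hxt hyt hcm, ?_⟩
      have hxy : Rel κ x y := rel_trans hκ (rel_symm (hrelw w x ⟨hxt, hxr⟩))
        (hrelw w y ⟨hyt, hyr⟩)
      have hxc : Rel κ x c := rel_left hxy hcm.1 hcm.2
      have : Rel κ c w.1 := rel_trans hκ (rel_symm hxc) (rel_symm (hrelw w x ⟨hxt, hxr⟩))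
      rw [hreq _ _ this, hwfix w]
    · -- cover
      ext x
      simp only [Set.mem_iUnion]
      constructor
      · intro hx
        exact ⟨⟨r x, Set.mem_image_of_mem r hx⟩, hx, rfl⟩
      · rintro ⟨w, hx, _⟩
        exact hx

end

section

variable {κ : Cardinal.{u}}

theorem forward_direction (hκ : ℵ₀ ≤ κ) {α : Type u} {instα : LinearOrder α}
    (h : InLClass κ α instα) : KScattered κ α ∧ #α ≤ κ := by
  induction h with
  | small α instα h => exact ⟨kscattered_of_small h, h.le⟩
  | iso α instα β instβ h e ih =>
    refine ⟨kscattered_of_orderIso e ih.1, ?_⟩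
    rw [← Cardinal.mk_congr e.toEquiv]
    exact ih.2
  | sum ι instι A instA hι hA ih =>
    have hικ : #ι ≤ κ := by
      rcases hι with h1 | ⟨⟨e⟩⟩ | ⟨⟨e⟩⟩
      · exact h1.le
      · rw [Cardinal.mk_congr e.toEquiv, Cardinal.mk_toType, Cardinal.card_ord]
      · rw [Cardinal.mk_congr (e.toEquiv.trans OrderDual.ofDual), Cardinal.mk_toType,
          Cardinal.card_ord]
    constructor
    · -- scatteredness
      rintro ⟨s, h2, hd⟩
      by_cases hfib : ∃ p ∈ s, ∃ q ∈ s, p ≠ q ∧ (ofLex p).1 = (ofLex q).1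
      · -- two points in the same fiber
        obtain ⟨p, hp, q, hq, hne, hfst⟩ := hfib
        obtain ⟨⟨i, x⟩, rfl⟩ : ∃ y : Σ i, A i, p = toLex y := ⟨ofLex p, rfl⟩
        obtain ⟨⟨j, y⟩, rfl⟩ : ∃ y : Σ i, A i, q = toLex y := ⟨ofLex q, rfl⟩
        have hij : i = j := hfst
        subst hij
        have hcomp_lt : ∀ z w : A i, toLex (⟨i, z⟩ : Σ i, A i) < toLex ⟨i, w⟩ ↔ z < w := by
          intro z w
          rw [Sigma.Lex.lt_def]
          constructor
          · rintro (h1 | ⟨h1, h2⟩)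
            · exact absurd h1 (lt_irrefl i)
            · cases h1; exact h2
          · intro hzw
            exact Or.inr ⟨rfl, hzw⟩
        have key : ∀ z w : A i, toLex (⟨i, z⟩ : Σ i, A i) ∈ s →
            toLex (⟨i, w⟩ : Σ i, A i) ∈ s → z < w → False := by
          intro z w hz hw hzw
          set s' : Set (A i) := {c | toLex (⟨i, c⟩ : Σ i, A i) ∈ s ∧ z ≤ c ∧ c ≤ w} with hs'
          refine (ih i).1 ⟨s', ?_, ?_⟩
          · rw [Cardinal.two_le_iff]
            refine ⟨⟨z, hz, le_rfl, hzw.le⟩, ⟨w, hw, hzw.le, le_rfl⟩, ?_⟩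
            intro hc
            exact (ne_of_lt hzw) (congrArg Subtype.val hc)
          · intro a' ha' b' hb' hab'
            have hd' := hd (toLex ⟨i, a'⟩) ha'.1 (toLex ⟨i, b'⟩) hb'.1
              ((hcomp_lt a' b').2 hab')
            rw [← hd']
            refine Cardinal.mk_congr (Equiv.ofBijective
              (fun c => ⟨toLex ⟨i, c.1⟩, c.2.1.1, (hcomp_lt _ _).2 c.2.2.1,
                (hcomp_lt _ _).2 c.2.2.2⟩) ⟨?_, ?_⟩)
            · intro c c' hcc'
              have := congrArg Subtype.val hcc'
              simp only at this
              exact Subtype.ext (sigma_mk_injective (toLex.injective this))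
            · rintro ⟨c, hcs, hac, hcb⟩
              obtain ⟨⟨k, e⟩, rfl⟩ : ∃ y : Σ i, A i, c = toLex y := ⟨ofLex c, rfl⟩
              have hki : k = i := by
                rcases Sigma.Lex.lt_def.1 hac with h1 | ⟨h1, _⟩
                · rcases Sigma.Lex.lt_def.1 hcb with h2 | ⟨h2, _⟩
                  · exact absurd (h1.trans h2) (lt_irrefl i)
                  · exact h2
                · exact h1.symm
              subst hki
              have hae : a' < e := (hcomp_lt _ _).1 hac
              have heb : e < b' := (hcomp_lt _ _).1 hcb
              refine ⟨⟨e, ⟨hcs, ?_, ?_⟩, hae, heb⟩, rfl⟩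
              · exact le_trans ha'.2.1 hae.le
              · exact le_trans heb.le hb'.2.2
        rcases lt_or_gt_of_ne (fun hc : x = y => hne (by rw [hc])) with hlt | hlt
        · exact key x y hp hq hlt
        · exact key y x hq hp hlt
      · -- the first components are injective on s
        push_neg at hfib
        have hinj : ∀ p ∈ s, ∀ q ∈ s, (ofLex p).1 = (ofLex q).1 → p = q := by
          intro p hp q hq hpq
          by_contra hne
          exact hfib p hp q hq hne hpq
        have hισc : KScattered κ ι := by
          rcases hι with h1 | ⟨⟨e⟩⟩ | ⟨⟨e⟩⟩
          · exact kscattered_of_small h1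
          · exact kscattered_of_orderIso e.symm (kscattered_of_wellFoundedLT hκ)
          · exact kscattered_of_orderIso e.symm
              (kscattered_dual (kscattered_of_wellFoundedLT hκ))
        set T : Set ι := (fun c : Σₗ i, A i => (ofLex c).1) '' s with hT
        refine hισc ⟨T, ?_, ?_⟩
        · rw [Cardinal.two_le_iff]
          rw [Cardinal.two_le_iff] at h2
          obtain ⟨p, q, hpq⟩ := h2
          refine ⟨⟨(ofLex p.1).1, Set.mem_image_of_mem _ p.2⟩,
            ⟨(ofLex q.1).1, Set.mem_image_of_mem _ q.2⟩, ?_⟩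
          intro hc
          have : (ofLex p.1).1 = (ofLex q.1).1 := congrArg Subtype.val hc
          exact hpq (Subtype.ext (hinj p.1 p.2 q.1 q.2 this))
        · rintro i hi j hj hij
          obtain ⟨p, hp, rfl⟩ := hi
          obtain ⟨q, hq, rfl⟩ := hj
          have hpq : p < q := Sigma.Lex.lt_def.2 (Or.inl hij)
          have hd' := hd p hp q hq hpq
          have hfst1 : ∀ c : ↥{c | c ∈ s ∧ p < c ∧ c < q},
              (ofLex p).1 < (ofLex c.1).1 := by
            intro c
            rcases Sigma.Lex.lt_def.1 c.2.2.1 with h1 | ⟨h1, _⟩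
            · exact h1
            · exact absurd (hinj p hp c.1 c.2.1 h1) (ne_of_lt c.2.2.1)
          have hfst2 : ∀ c : ↥{c | c ∈ s ∧ p < c ∧ c < q},
              (ofLex c.1).1 < (ofLex q).1 := by
            intro c
            rcases Sigma.Lex.lt_def.1 c.2.2.2 with h1 | ⟨h1, _⟩
            · exact h1
            · exact absurd (hinj c.1 c.2.1 q hq h1) (ne_of_lt c.2.2.2)
          have e : ↥{c | c ∈ s ∧ p < c ∧ c < q} ≃
              ↥{k : ι | k ∈ T ∧ (ofLex p).1 < k ∧ k < (ofLex q).1} := by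
            refine Equiv.ofBijective
              (fun c => ⟨(ofLex c.1).1, Set.mem_image_of_mem _ c.2.1,
                hfst1 c, hfst2 c⟩) ⟨?_, ?_⟩
            · intro c c' hcc'
              have hfst : (ofLex c.1).1 = (ofLex c'.1).1 := congrArg Subtype.val hcc'
              exact Subtype.ext (hinj c.1 c.2.1 c'.1 c'.2.1 hfst)
            · rintro ⟨k, hkT, hik, hkj⟩
              obtain ⟨c, hcs, hck⟩ := hkT
              have hck' : (ofLex c).1 = k := hck
              refine ⟨⟨c, hcs, ?_, ?_⟩, Subtype.ext hck'⟩
              · refine Sigma.Lex.lt_def.2 (Or.inl ?_)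
                show (ofLex p).1 < (ofLex c).1
                rw [hck']
                exact hik
              · refine Sigma.Lex.lt_def.2 (Or.inl ?_)
                show (ofLex c).1 < (ofLex q).1
                rw [hck']
                exact hkj
          rw [← hd']
          exact (Cardinal.mk_congr e).symm
    · -- cardinality
      calc #(Σₗ i, A i) = #(Σ i, A i) := Cardinal.mk_congr (toLex (α := Σ i, A i)).symm
        _ = Cardinal.sum (fun i => #(A i)) := Cardinal.mk_sigma _
        _ ≤ Cardinal.sum (fun _ : ι => κ) := Cardinal.sum_le_sum _ _ (fun i => (ih i).2)
        _ = #ι * κ := Cardinal.sum_const' ι κ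
        _ ≤ κ * κ := mul_le_mul_left hικ κ
        _ = κ := Cardinal.mul_eq_self hκ

end

/-- The class `L_{∞,κ}` is exactly the class of κ-scattered linear orders of size at
most κ; in particular it contains every ordinal `β < κ⁺` and its reverse. -/
theorem inLClass_eq_kScattered (κ : Cardinal.{u}) (hκ : ℵ₀ ≤ κ) :
    (∀ (α : Type u) (instα : LinearOrder α),
        InLClass κ α instα ↔ (KScattered κ α ∧ #α ≤ κ)) ∧
    (∀ β : Ordinal.{u}, β < (Order.succ κ).ord →
        InLClass κ β.ToType inferInstance ∧ InLClass κ (β.ToType)ᵒᵈ inferInstance) := by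
  constructor
  · intro α instα
    constructor
    · intro h
      exact @forward_direction κ hκ α instα h
    · rintro ⟨hsc, hcard⟩
      exact @reverse_direction κ α instα hκ hsc hcard
  · intro β hβ
    have hcard : #β.ToType ≤ κ := by
      rw [Cardinal.mk_toType]
      exact Order.lt_succ_iff.1 (Cardinal.lt_ord.1 hβ)
    constructor
    · exact reverse_direction hκ (kscattered_of_wellFoundedLT hκ) hcard
    · refine reverse_direction hκ (kscattered_dual (kscattered_of_wellFoundedLT hκ)) ?_
      rw [Cardinal.mk_congr (OrderDual.ofDual (α := β.ToType))]
      exact hcard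

end StructuredSunflowers
end

section
/- Let κ be an infinite cardinal and X a κ-scattered linear order of size κ. Then X can be written as a lexicographic sum X = Σ_{i∈D} X_i where the index order D either has size < κ or has order type κ or κ*, and no X_i contains an isomorphic copy of X as a suborder. -/
open Cardinal

universe u

namespace StructuredSunflowers

/-! ### Auxiliary machinery for the decomposition theorem -/

section Aux

variable {κ : Cardinal.{u}}

/-- `α` embeds into some member of the class `L_{∞,κ}`. -/
def Emb (κ : Cardinal.{u}) (α : Type u) [LinearOrder α] : Prop :=
  ∃ (Z : Type u) (iZ : LinearOrder Z), InLClass κ Z iZ ∧ Nonempty (α ↪o Z)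

lemma emb_of_card_lt {α : Type u} [LinearOrder α] (h : #α < κ) : Emb κ α :=
  ⟨α, ‹LinearOrder α›, InLClass.small α _ h, ⟨(OrderIso.refl α).toOrderEmbedding⟩⟩

lemma Emb.mono {α β : Type u} [LinearOrder α] [LinearOrder β] (e : α ↪o β)
    (h : Emb κ β) : Emb κ α := by
  obtain ⟨Z, iZ, hZ, ⟨g⟩⟩ := h
  exact ⟨Z, iZ, hZ, ⟨e.trans g⟩⟩

/-- Plumbing lemma: if `β` maps strictly monotonically into a subset `t` of `X`, and the
suborder `t` embeds into the class, then so does `β`. -/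
lemma emb_of_strictMono_into {X : Type u} [LinearOrder X] {β : Type u} [LinearOrder β]
    {t : Set X} (m : β → X) (hm : StrictMono m) (hr : ∀ b, m b ∈ t)
    (h : Emb κ ↥t) : Emb κ β :=
  Emb.mono (OrderEmbedding.ofStrictMono (fun b => (⟨m b, hr b⟩ : ↥t))
    (fun a b hab => by exact Subtype.mk_lt_mk.mpr (hm hab))) h

private lemma pair_congr {α : Type u} {D : Type u} {Z : D → Type u} (f : α → D)
    {i j : D} (hij : i = j) (g : ∀ d, ↥(f ⁻¹' {d}) → Z d) (y : α) (hi : f y = i) (hj : f y = j) :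
    (⟨i, g i ⟨y, hi⟩⟩ : Σ d, Z d) = ⟨j, g j ⟨y, hj⟩⟩ := by
  subst hij; rfl

private lemma snd_lt_of_lex_lt {ι : Type u} [LinearOrder ι] {A : ι → Type u}
    [instA : ∀ i, LinearOrder (A i)] {i : ι} :
    ∀ {p q : Σₗ j, A j}, p < q → ∀ (hp : p.1 = i) (hq : q.1 = i),
      (hp ▸ p.2 : A i) < hq ▸ q.2 := by
  rintro ⟨j, a⟩ ⟨k, b⟩ hpq hp hq
  change j = i at hp
  change k = i at hq
  subst hp
  subst hq
  obtain hlt | ⟨heq, hlt⟩ := Sigma.lex_iff.mp hpq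
  · exact absurd hlt (lt_irrefl _)
  · exact hlt

/-- The key partition lemma: if `α` is partitioned (via a monotone map to an index
order `D` of an allowed shape) into fibers each of which embeds into the class,
then `α` embeds into the class. -/
lemma emb_of_partition {α D : Type u} [LinearOrder α] [LinearOrder D] (f : α → D)
    (hf : Monotone f)
    (hD : #D < κ ∨ Nonempty (D ≃o κ.ord.ToType) ∨ Nonempty (D ≃o (κ.ord.ToType)ᵒᵈ))
    (hfib : ∀ i : D, Emb κ ↥(f ⁻¹' {i})) : Emb κ α := by
  have hdata : ∀ i : D, Nonempty (Σ' (Z : Type u) (iZ : LinearOrder Z),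
      InLClass κ Z iZ ∧ Nonempty (↥(f ⁻¹' {i}) ↪o Z)) := by
    intro i
    obtain ⟨Z, iZ, h1, h2⟩ := hfib i
    exact ⟨⟨Z, iZ, h1, h2⟩⟩
  have dat : ∀ i : D, (Σ' (Z : Type u) (iZ : LinearOrder Z),
      InLClass κ Z iZ ∧ Nonempty (↥(f ⁻¹' {i}) ↪o Z)) := fun i => Classical.choice (hdata i)
  let Z : D → Type u := fun i => (dat i).1
  letI instZ : ∀ i, LinearOrder (Z i) := fun i => (dat i).2.1
  have hmem : ∀ i, InLClass κ (Z i) (instZ i) := fun i => (dat i).2.2.1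
  have g : ∀ i, ↥(f ⁻¹' {i}) ↪o Z i := fun i => Classical.choice (dat i).2.2.2
  refine ⟨Σₗ i, Z i, inferInstance, InLClass.sum D ‹LinearOrder D› Z instZ hD hmem, ⟨?_⟩⟩
  refine OrderEmbedding.ofStrictMono (fun x => ⟨f x, g (f x) ⟨x, rfl⟩⟩) ?_
  intro x y hxy
  obtain h | h := (hf hxy.le).lt_or_eq
  · exact Sigma.Lex.left _ _ h
  · have hy : y ∈ f ⁻¹' {f x} := by
      simp only [Set.mem_preimage, Set.mem_singleton_iff]
      exact h.symm
    have e2 : (⟨f y, g (f y) ⟨y, rfl⟩⟩ : Σₗ d, Z d)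
        = ⟨f x, g (f x) ⟨y, hy⟩⟩ :=
      pair_congr f h.symm (fun d z => g d z) y rfl hy
    show Sigma.Lex (· < ·) (fun d => (· < ·))
      ⟨f x, g (f x) ⟨x, rfl⟩⟩ ⟨f y, g (f y) ⟨y, rfl⟩⟩
    rw [e2]
    exact Sigma.Lex.right _ _ ((g (f x)).strictMono
      (show (⟨x, rfl⟩ : ↥(f ⁻¹' {f x})) < ⟨y, hy⟩ from Subtype.mk_lt_mk.mpr hxy))

end Aux

section Equivalence

variable (κ : Cardinal.{u}) {X : Type u} [LinearOrder X]

/-- Two points are equivalent if the (unordered) closed interval between them embeds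
into the class. -/
def Eqv (x y : X) : Prop := Emb κ ↥(Set.uIcc x y)

variable {κ}

lemma eqv_refl (hκ : ℵ₀ ≤ κ) (x : X) : Eqv κ x x := by
  unfold Eqv
  rw [Set.uIcc_self]
  refine emb_of_card_lt ?_
  rw [Cardinal.mk_singleton]
  exact lt_of_lt_of_le Cardinal.one_lt_aleph0 hκ

lemma eqv_symm {x y : X} (h : Eqv κ x y) : Eqv κ y x := by
  unfold Eqv at h ⊢
  rwa [Set.uIcc_comm]

lemma emb_subset {s t : Set X} (hst : s ⊆ t) (h : Emb κ ↥t) : Emb κ ↥s :=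
  emb_of_strictMono_into (fun z => z.1) (fun a b hab => hab) (fun z => hst z.2) h

lemma two_lt_of_aleph0_le (hκ : ℵ₀ ≤ κ) : #(ULift.{u} Bool) < κ := by
  rw [Cardinal.mk_fintype]
  refine lt_of_lt_of_le ?_ hκ
  exact_mod_cast Cardinal.nat_lt_aleph0 _

private lemma eqv_trans_aux (hκ : ℵ₀ ≤ κ) {x y z : X} (hxz : x ≤ z)
    (h1 : Eqv κ x y) (h2 : Eqv κ y z) : Eqv κ x z := by
  unfold Eqv
  refine emb_of_partition (fun w => (⟨decide (y ≤ w.1)⟩ : ULift.{u} Bool)) ?_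
    (Or.inl (two_lt_of_aleph0_le hκ)) ?_
  · intro a b hab
    show (decide (y ≤ a.1) : Bool) ≤ decide (y ≤ b.1)
    by_cases h : y ≤ a.1
    · have : y ≤ b.1 := h.trans hab
      simp [h, this]
    · simp [h]
  · intro i
    obtain ⟨bi⟩ := i
    cases bi
    · -- fiber of false : points < y, inside uIcc x y
      refine emb_of_strictMono_into (fun w => w.1.1) (fun a b hab => hab) ?_ h1
      rintro ⟨⟨w, hw⟩, hfib⟩
      have hww : ¬ y ≤ w := by
        have := congrArg ULift.down hfib
        simpa using this
      rw [Set.uIcc_of_le hxz] at hw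
      exact Set.mem_uIcc_of_le hw.1 (not_le.mp hww).le
    · -- fiber of true : points ≥ y, inside uIcc y z
      refine emb_of_strictMono_into (fun w => w.1.1) (fun a b hab => hab) ?_ h2
      rintro ⟨⟨w, hw⟩, hfib⟩
      have hww : y ≤ w := by
        have := congrArg ULift.down hfib
        simpa using this
      rw [Set.uIcc_of_le hxz] at hw
      exact Set.mem_uIcc_of_le hww hw.2

lemma eqv_trans (hκ : ℵ₀ ≤ κ) {x y z : X} (h1 : Eqv κ x y) (h2 : Eqv κ y z) :
    Eqv κ x z := by
  rcases le_total x z with h | h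
  · exact eqv_trans_aux hκ h h1 h2
  · have := eqv_trans_aux hκ h (eqv_symm h2) (eqv_symm h1)
    exact eqv_symm this

lemma eqv_left {a b w : X} (h : Eqv κ a b) (hw : w ∈ Set.uIcc a b) : Eqv κ a w :=
  emb_subset (Set.uIcc_subset_uIcc Set.left_mem_uIcc hw) h

lemma eqv_right {a b w : X} (h : Eqv κ a b) (hw : w ∈ Set.uIcc a b) : Eqv κ w b :=
  emb_subset (Set.uIcc_subset_uIcc hw Set.right_mem_uIcc) h

/-- Inequivalent points separate their classes. -/
lemma lt_of_not_eqv (hκ : ℵ₀ ≤ κ) {z z' a b : X} (hzz' : z < z') (hne : ¬ Eqv κ z z')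
    (ha : Eqv κ a z) (hb : Eqv κ b z') : a < b := by
  by_contra hba
  push_neg at hba
  rcases le_or_gt z' a with h | h
  · -- z ≤ z' ≤ a, a ~ z  ⇒ z ~ z'
    have hz' : z' ∈ Set.uIcc z a := Set.mem_uIcc_of_le hzz'.le h
    exact hne (eqv_left (eqv_symm ha) hz')
  · -- b ≤ a < z', b ~ z' ⇒ a ~ z' ⇒ z ~ z'
    have haz' : a ∈ Set.uIcc b z' := Set.mem_uIcc_of_le hba h.le
    have h1 : Eqv κ a z' := eqv_right hb haz'
    exact hne (eqv_trans hκ (eqv_symm ha) h1)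

end Equivalence

section Workhorse

variable {κ : Cardinal.{u}} {X : Type u} [LinearOrder X]

/-- The workhorse: any set of pairwise-equivalent points embeds into the class. -/
lemma emb_of_pairwise_eqv (hκ : ℵ₀ ≤ κ) (hcard : #X ≤ κ) (P : Set X)
    (hP : ∀ a ∈ P, ∀ b ∈ P, Eqv κ a b) : Emb κ ↥P := by
  by_cases hne : P.Nonempty
  swap
  · refine emb_of_card_lt ?_
    rw [Set.not_nonempty_iff_eq_empty] at hne
    subst hne
    simp only [Cardinal.mk_eq_zero]
    exact lt_of_lt_of_le Cardinal.aleph0_pos hκ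
  obtain ⟨x0, hx0⟩ := hne
  -- upper part
  have hupper : Emb κ ↥{w ∈ P | x0 ≤ w} := by
    set B : Set X := {w ∈ P | x0 ≤ w} with hB
    have hBne : Nonempty ↥B := ⟨⟨x0, hx0, le_rfl⟩⟩
    have hBcard : #↥B ≤ #(κ.ord.ToType) := by
      rw [Cardinal.mk_ord_toType]
      exact le_trans (Cardinal.mk_set_le B) hcard
    obtain ⟨inj⟩ := (Cardinal.le_def _ _).mp hBcard
    let g : κ.ord.ToType → ↥B := Function.invFun inj
    have hg : ∀ b : ↥B, g (inj b) = b := Function.leftInverse_invFun inj.injective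
    have wf : WellFounded ((· < ·) : κ.ord.ToType → κ.ord.ToType → Prop) :=
      IsWellFounded.wf
    have hSne : ∀ w : ↥B, ({a : κ.ord.ToType | w.1 ≤ (g a).1}).Nonempty := by
      intro w
      exact ⟨inj w, by rw [Set.mem_setOf_eq, hg w]⟩
    refine emb_of_partition
      (fun w => wf.min {a : κ.ord.ToType | w.1 ≤ (g a).1} (hSne w)) ?_
      (Or.inr (Or.inl ⟨OrderIso.refl _⟩)) ?_
    · intro w w' hww'
      have hsub : {a : κ.ord.ToType | w'.1 ≤ (g a).1} ⊆ {a : κ.ord.ToType | w.1 ≤ (g a).1} := by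
        intro a ha
        exact le_trans hww' ha
      exact wf.min_le (hsub (wf.min_mem _ (hSne w')))
    · intro i
      refine emb_of_strictMono_into (fun w => w.1.1) (fun a b hab => hab) ?_
        (hP x0 hx0 (g i).1 (g i).2.1)
      rintro ⟨⟨w, hw⟩, hfib⟩
      have hle : w ≤ (g i).1 := by
        have hmem := wf.min_mem {a : κ.ord.ToType | w ≤ (g a).1} (hSne ⟨w, hw⟩)
        rw [show wf.min {a : κ.ord.ToType | w ≤ (g a).1} (hSne ⟨w, hw⟩) = i from hfib] at hmem
        exact hmem
      exact Set.mem_uIcc_of_le hw.2 hle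
  -- lower part
  have hlower : Emb κ ↥{w ∈ P | w ≤ x0} := by
    set A : Set X := {w ∈ P | w ≤ x0} with hA
    have hAne : Nonempty ↥A := ⟨⟨x0, hx0, le_rfl⟩⟩
    have hAcard : #↥A ≤ #(κ.ord.ToType) := by
      rw [Cardinal.mk_ord_toType]
      exact le_trans (Cardinal.mk_set_le A) hcard
    obtain ⟨inj⟩ := (Cardinal.le_def _ _).mp hAcard
    let g : κ.ord.ToType → ↥A := Function.invFun inj
    have hg : ∀ b : ↥A, g (inj b) = b := Function.leftInverse_invFun inj.injective
    have wf : WellFounded ((· < ·) : κ.ord.ToType → κ.ord.ToType → Prop) :=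
      IsWellFounded.wf
    have hSne : ∀ w : ↥A, ({a : κ.ord.ToType | (g a).1 ≤ w.1}).Nonempty := by
      intro w
      exact ⟨inj w, by rw [Set.mem_setOf_eq, hg w]⟩
    refine emb_of_partition
      (fun w => (OrderDual.toDual
        (wf.min {a : κ.ord.ToType | (g a).1 ≤ w.1} (hSne w)) : (κ.ord.ToType)ᵒᵈ)) ?_
      (Or.inr (Or.inr ⟨OrderIso.refl _⟩)) ?_
    · intro w w' hww'
      have hsub : {a : κ.ord.ToType | (g a).1 ≤ w.1} ⊆ {a : κ.ord.ToType | (g a).1 ≤ w'.1} := by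
        intro a ha
        exact le_trans ha hww'
      exact wf.min_le (hsub (wf.min_mem _ (hSne w)))
    · intro i
      refine emb_of_strictMono_into (fun w => w.1.1) (fun a b hab => hab) ?_
        (hP (g (OrderDual.ofDual i)).1 (g (OrderDual.ofDual i)).2.1 x0 hx0)
      rintro ⟨⟨w, hw⟩, hfib⟩
      have hle : (g (OrderDual.ofDual i)).1 ≤ w := by
        have hmem := wf.min_mem {a : κ.ord.ToType | (g a).1 ≤ w} (hSne ⟨w, hw⟩)
        rw [show wf.min {a : κ.ord.ToType | (g a).1 ≤ w} (hSne ⟨w, hw⟩)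
          = OrderDual.ofDual i from congrArg OrderDual.ofDual hfib] at hmem
        exact hmem
      exact Set.mem_uIcc_of_le hle hw.2
  -- combine
  refine emb_of_partition (fun w => (⟨decide (x0 ≤ w.1)⟩ : ULift.{u} Bool)) ?_
    (Or.inl (two_lt_of_aleph0_le hκ)) ?_
  · intro a b hab
    show (decide (x0 ≤ a.1) : Bool) ≤ decide (x0 ≤ b.1)
    by_cases h : x0 ≤ a.1
    · have : x0 ≤ b.1 := h.trans hab
      simp [h, this]
    · simp [h]
  · intro i
    obtain ⟨bi⟩ := i
    cases bi
    · refine emb_of_strictMono_into (fun w => w.1.1) (fun a b hab => hab) ?_ hlower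
      rintro ⟨⟨w, hw⟩, hfib⟩
      have hww : ¬ x0 ≤ w := by
        have := congrArg ULift.down hfib
        simpa using this
      exact ⟨hw, (not_le.mp hww).le⟩
    · refine emb_of_strictMono_into (fun w => w.1.1) (fun a b hab => hab) ?_ hupper
      rintro ⟨⟨w, hw⟩, hfib⟩
      have hww : x0 ≤ w := by
        have := congrArg ULift.down hfib
        simpa using this
      exact ⟨hw, hww⟩

end Workhorse

section Classification

variable {κ : Cardinal.{u}} {X : Type u} [LinearOrder X]

/-- The canonical representative of the equivalence class of a point. -/
noncomputable def eqvSetoid (κ : Cardinal.{u}) (X : Type u) [LinearOrder X]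
    (hκ : ℵ₀ ≤ κ) : Setoid X :=
  ⟨Eqv κ, ⟨eqv_refl hκ, eqv_symm, fun h1 h2 => eqv_trans hκ h1 h2⟩⟩

noncomputable def rep (κ : Cardinal.{u}) (X : Type u) [LinearOrder X] (hκ : ℵ₀ ≤ κ)
    (w : X) : X :=
  (Quotient.mk (eqvSetoid κ X hκ) w).out

lemma rep_eqv (hκ : ℵ₀ ≤ κ) (w : X) : Eqv κ (rep κ X hκ w) w :=
  Quotient.exact (Quotient.out_eq (Quotient.mk (eqvSetoid κ X hκ) w))

lemma rep_eq_of_eqv (hκ : ℵ₀ ≤ κ) {w w' : X} (h : Eqv κ w w') :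
    rep κ X hκ w = rep κ X hκ w' :=
  congrArg Quotient.out (Quotient.sound h)

lemma rep_mono (hκ : ℵ₀ ≤ κ) : Monotone (rep κ X hκ) := by
  intro z z' hzz'
  by_cases heq : Eqv κ z z'
  · exact le_of_eq (rep_eq_of_eqv hκ heq)
  · rcases eq_or_lt_of_le hzz' with rfl | hlt
    · exact le_rfl
    · exact (lt_of_not_eqv hκ hlt heq (rep_eqv hκ z) (rep_eqv hκ z')).le

lemma rep_idem (hκ : ℵ₀ ≤ κ) {t : X} (ht : t ∈ Set.range (rep κ X hκ)) :
    rep κ X hκ t = t := by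
  obtain ⟨w, rfl⟩ := ht
  exact rep_eq_of_eqv hκ (rep_eqv hκ w)

/-- If between two inequivalent points there are fewer than `κ` representatives,
then the interval embeds into the class — contradiction. So there are at least `κ`. -/
lemma many_reps (hκ : ℵ₀ ≤ κ) (hcard : #X ≤ κ) {x y : X} (hxy : x < y)
    (hne : ¬ Eqv κ x y) :
    κ ≤ #↥{t : X | t ∈ Set.range (rep κ X hκ) ∧ x < t ∧ t < y} := by
  by_contra hlt
  push_neg at hlt
  set T : Set X := {t : X | t ∈ Set.range (rep κ X hκ) ∧ x < t ∧ t < y} with hT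
  apply hne
  have hDcard : #↥(insert x (insert y T)) < κ := by
    have h1 : (1 : Cardinal) < κ := lt_of_lt_of_le Cardinal.one_lt_aleph0 hκ
    calc #↥(insert x (insert y T)) ≤ #↥(insert y T) + 1 := Cardinal.mk_insert_le
      _ ≤ (#↥T + 1) + 1 := by
          exact add_le_add_left Cardinal.mk_insert_le 1
      _ < κ := Cardinal.add_lt_of_lt hκ (Cardinal.add_lt_of_lt hκ hlt h1) h1
  -- the clamped representative map
  set c : X → X := fun w => max x (min (rep κ X hκ w) y) with hc
  have hcmono : Monotone c := by
    intro a b hab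
    exact max_le_max le_rfl (min_le_min (rep_mono hκ hab) le_rfl)
  have hcmem : ∀ w : ↥(Set.Icc x y), c w.1 ∈ insert x (insert y T) := by
    rintro ⟨w, hw⟩
    rcases le_or_gt (rep κ X hκ w) x with h | h
    · have : c w = x := by
        rw [hc]
        simp only
        rw [min_eq_left (h.trans hxy.le), max_eq_left h]
      rw [this]
      exact Set.mem_insert _ _
    · rcases le_or_gt y (rep κ X hκ w) with h' | h'
      · have : c w = y := by
          rw [hc]
          simp only
          rw [min_eq_right h', max_eq_right hxy.le]
        rw [this]
        exact Set.mem_insert_of_mem _ (Set.mem_insert _ _)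
      · have : c w = rep κ X hκ w := by
          rw [hc]
          simp only
          rw [min_eq_left h'.le, max_eq_right h.le]
        rw [this]
        exact Set.mem_insert_of_mem _ (Set.mem_insert_of_mem _
          ⟨⟨w, rfl⟩, h, h'⟩)
  have hIcc : Emb κ ↥(Set.Icc x y) := by
    refine emb_of_partition
      (fun w => (⟨c w.1, hcmem w⟩ : ↥(insert x (insert y T)))) ?_
      (Or.inl hDcard) ?_
    · intro a b hab
      exact Subtype.mk_le_mk.mpr (hcmono hab)
    · intro d
      -- every element of the fiber is equivalent to d.1
      have hfib_eqv : ∀ w : ↥(Set.Icc x y),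
          c w.1 = d.1 → Eqv κ w.1 d.1 := by
        rintro ⟨w, hw⟩ hcw
        rcases le_or_gt (rep κ X hκ w) x with h | h
        · have hcx : c w = x := by
            rw [hc]; simp only
            rw [min_eq_left (h.trans hxy.le), max_eq_left h]
          have hdx : d.1 = x := by rw [← hcw, hcx]
          rw [hdx]
          -- rep w ≤ x ≤ w, rep w ~ w so x ∈ uIcc (rep w) w
          have hxmem : x ∈ Set.uIcc (rep κ X hκ w) w := Set.mem_uIcc_of_le h hw.1
          exact eqv_symm (eqv_right (rep_eqv hκ w) hxmem)
        · rcases le_or_gt y (rep κ X hκ w) with h' | h'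
          · have hcy : c w = y := by
              rw [hc]; simp only
              rw [min_eq_right h', max_eq_right hxy.le]
            have hdy : d.1 = y := by rw [← hcw, hcy]
            rw [hdy]
            have hymem : y ∈ Set.uIcc w (rep κ X hκ w) := Set.mem_uIcc_of_le hw.2 h'
            exact eqv_left (eqv_symm (rep_eqv hκ w)) hymem
          · have hcr : c w = rep κ X hκ w := by
              rw [hc]; simp only
              rw [min_eq_left h'.le, max_eq_right h.le]
            have hdr : d.1 = rep κ X hκ w := by rw [← hcw, hcr]
            rw [hdr]
            exact eqv_symm (rep_eqv hκ w)
      -- the fiber is a pairwise equivalent set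
      set Q : Set X := {v : X | ∃ hv : v ∈ Set.Icc x y,
        c v = d.1} with hQ
      have hQpe : ∀ a ∈ Q, ∀ b ∈ Q, Eqv κ a b := by
        rintro a ⟨ha1, ha2⟩ b ⟨hb1, hb2⟩
        exact eqv_trans hκ (hfib_eqv ⟨a, ha1⟩ ha2) (eqv_symm (hfib_eqv ⟨b, hb1⟩ hb2))
      have hQemb : Emb κ ↥Q := emb_of_pairwise_eqv hκ hcard Q hQpe
      refine emb_of_strictMono_into (fun w => w.1.1) (fun a b hab => hab) ?_ hQemb
      rintro ⟨⟨w, hw⟩, hfib⟩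
      exact ⟨hw, congrArg Subtype.val hfib⟩
  unfold Eqv
  rwa [Set.uIcc_of_le hxy.le]

/-- The main classification step: a κ-scattered linear order of size at most κ embeds
into some member of the class. -/
lemma emb_of_kScattered (hκ : ℵ₀ ≤ κ) (hX : KScattered κ X) (hcard : #X = κ) :
    Emb κ X := by
  by_cases hall : ∀ x y : X, Eqv κ x y
  · have := emb_of_pairwise_eqv hκ hcard.le (Set.univ : Set X)
      (fun a _ b _ => hall a b)
    exact Emb.mono (OrderEmbedding.ofStrictMono (fun x => (⟨x, trivial⟩ : ↥(Set.univ : Set X)))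
      (fun a b hab => Subtype.mk_lt_mk.mpr hab)) this
  · push_neg at hall
    obtain ⟨x, y, hne⟩ := hall
    -- wlog x < y
    have hmain : ∀ x y : X, x < y → ¬ Eqv κ x y → False := by
      intro x y hxy hne
      set s : Set X := {t : X | t ∈ Set.range (rep κ X hκ) ∧ x < t ∧ t < y} with hs
      apply hX
      refine ⟨s, ?_, ?_⟩
      · -- 2 ≤ #s
        have h2 : (2 : Cardinal) ≤ κ := by
          refine le_trans ?_ hκ
          exact_mod_cast (Cardinal.nat_lt_aleph0 2).le
        exact le_trans h2 (many_reps hκ hcard.le hxy hne)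
      · intro a ha b hb hab
        -- a, b are inequivalent representatives
        have hna : rep κ X hκ a = a := rep_idem hκ ha.1
        have hnb : rep κ X hκ b = b := rep_idem hκ hb.1
        have hneab : ¬ Eqv κ a b := by
          intro h
          have := rep_eq_of_eqv hκ h
          rw [hna, hnb] at this
          exact absurd this hab.ne
        have hge : κ ≤ #{c : X | c ∈ s ∧ a < c ∧ c < b} := by
          refine le_trans (many_reps hκ hcard.le hab hneab) ?_
          refine Cardinal.mk_le_mk_of_subset ?_
          rintro t ⟨ht1, ht2, ht3⟩
          exact ⟨⟨ht1, lt_trans ha.2.1 ht2, lt_trans ht3 hb.2.2⟩, ht2, ht3⟩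
        have hle : #{c : X | c ∈ s ∧ a < c ∧ c < b} ≤ κ := by
          rw [← hcard]
          exact Cardinal.mk_set_le _
        exact le_antisymm hle hge
    rcases lt_trichotomy x y with h | h | h
    · exact absurd (hmain x y h hne) id
    · exact absurd (h ▸ eqv_refl hκ x) hne
    · exact absurd (hmain y x h (fun hh => hne (eqv_symm hh))) id

end Classification

/-- Every κ-scattered linear order of size κ decomposes as a lexicographic sum, indexed
by an order of size `< κ` or of order type `κ` or `κ*`, none of whose summands contains
a copy of the whole order. -/
theorem kScattered_decomposition (κ : Cardinal.{u}) (hκ : ℵ₀ ≤ κ) (X : Type u)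
    [LinearOrder X] (hX : KScattered κ X) (hcard : #X = κ) :
    ∃ (D : Type u) (_ : LinearOrder D) (f : X → D), Monotone f ∧
      (#D < κ ∨ Nonempty (D ≃o κ.ord.ToType) ∨ Nonempty (D ≃o (κ.ord.ToType)ᵒᵈ)) ∧
      ∀ i : D, ¬ Nonempty (X ↪o (f ⁻¹' {i})) := by
  obtain ⟨Z, iZ, hZ, he⟩ := emb_of_kScattered hκ hX hcard
  have main : ∀ (Z : Type u) (iZ : LinearOrder Z), InLClass κ Z iZ →
      Nonempty (X ↪o Z) →
      ∃ (D : Type u) (_ : LinearOrder D) (f : X → D), Monotone f ∧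
        (#D < κ ∨ Nonempty (D ≃o κ.ord.ToType) ∨ Nonempty (D ≃o (κ.ord.ToType)ᵒᵈ)) ∧
        ∀ i : D, ¬ Nonempty (X ↪o (f ⁻¹' {i})) := by
    intro Z iZ hZ
    induction hZ with
    | small α instα hα =>
      rintro ⟨e⟩
      exfalso
      have : #X ≤ #α := Cardinal.mk_le_of_injective e.injective
      rw [hcard] at this
      exact absurd (lt_of_le_of_lt this hα) (lt_irrefl κ)
    | sum ι instι A instA hι hA ih =>
      rintro ⟨e⟩
      by_cases hc : ∃ i, Nonempty (X ↪o A i)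
      · obtain ⟨i, hi⟩ := hc
        exact ih i hi
      · push_neg at hc
        refine ⟨ι, instι, fun x => (e x).1, ?_, hι, ?_⟩
        · intro x y hxy
          have h := e.monotone hxy
          obtain h' | ⟨h', _⟩ := Sigma.lex_iff.mp h
          · exact le_of_lt h'
          · exact le_of_eq h'
        · rintro i ⟨m⟩
          refine (hc i).false (m.trans (OrderEmbedding.ofStrictMono
            (fun z => (show (e z.1).1 = i from z.2) ▸ (e z.1).2) ?_))
          intro a b hab
          exact snd_lt_of_lex_lt (e.strictMono (Subtype.mk_lt_mk.mp hab)) a.2 b.2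
    | iso α instα β instβ h e' ih =>
      rintro ⟨f⟩
      exact ih ⟨f.trans e'.symm.toOrderEmbedding⟩
  exact main Z iZ hZ he

end StructuredSunflowers
end

section
/- If an age K (a class of finite L-structures closed under isomorphism) has the joint embedding property and is indivisible, then K has unique unary quantifier-free types: for all A, B ∈ K and all a ∈ A, b ∈ B, the quantifier-free type of a in A equals the quantifier-free type of b in B. -/
open FirstOrder Cardinal

universe u v w x

namespace StructuredSunflowers

variable (L : FirstOrder.Language.{u, v})

/-- An age (an isomorphism-closed class of finite structures) with the joint embedding
property which is indivisible has unique unary quantifier-free types. -/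
theorem uniqueUnaryQF_of_jep_indivisible (L : FirstOrder.Language.{u, v})
    (K : ∀ A : Type w, L.Structure A → Prop)
    (hiso : ∀ (A : Type w) (instA : L.Structure A) (B : Type w) (instB : L.Structure B),
      K A instA → Nonempty (A ≃[L] B) → K B instB)
    (hfin : ∀ (A : Type w) (instA : L.Structure A), K A instA → Finite A)
    (hjep : ∀ (A : Type w) (instA : L.Structure A) (B : Type w) (instB : L.Structure B),
      K A instA → K B instB →
      ∃ (C : Type w) (instC : L.Structure C), K C instC ∧
        Nonempty (A ↪[L] C) ∧ Nonempty (B ↪[L] C))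
    (hind : ∀ (A : Type w) (instA : L.Structure A), K A instA → ∀ n : ℕ,
      ∃ (B : Type w) (instB : L.Structure B), K B instB ∧
        ∀ c : B → Fin (n + 1), ∃ g : A ↪[L] B, ∃ k : Fin (n + 1),
          ∀ a : A, c (g a) = k) :
    ∀ (A : Type w) (instA : L.Structure A) (B : Type w) (instB : L.Structure B),
      K A instA → K B instB → ∀ (a : A) (b : B) (φ : L.Formula (Fin 1)), φ.IsQF →
        (φ.Realize (fun _ => a) ↔ φ.Realize (fun _ => b)) := by
  intro A instA B instB hA hB a b φ hφ
  classical
  obtain ⟨C, instC, hC, ⟨fA⟩, ⟨fB⟩⟩ := hjep A instA B instB hA hB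
  obtain ⟨D, instD, hD, hcol⟩ := hind C instC hC 1
  set c : D → Fin 2 := fun x => if φ.Realize (fun _ => x) then 0 else 1 with hc
  obtain ⟨g, k, hk⟩ := hcol c
  have key : ∀ (M : Type w) (instM : L.Structure M) (f : M ↪[L] D) (m : M),
      (φ.Realize (fun _ => m) ↔ φ.Realize (fun _ => f m)) := by
    intro M instM f m
    have := hφ.realize_embedding f (v := fun _ : Fin 1 => m)
      (xs := (default : Fin 0 → M))
    have e0 : (⇑f ∘ (default : Fin 0 → M)) = (default : Fin 0 → D) :=
      funext fun i => i.elim0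
    rw [e0] at this
    exact this.symm
  have ha : φ.Realize (fun _ => a) ↔ φ.Realize (fun _ => g (fA a)) := by
    have := key A instA (g.comp fA) a
    simpa using this
  have hb : φ.Realize (fun _ => b) ↔ φ.Realize (fun _ => g (fB b)) := by
    have := key B instB (g.comp fB) b
    simpa using this
  have hcc : c (g (fA a)) = c (g (fB b)) := by rw [hk (fA a), hk (fB b)]
  have hcc' : (if φ.Realize (fun _ => g (fA a)) then (0 : Fin 2) else 1)
      = (if φ.Realize (fun _ => g (fB b)) then 0 else 1) := hcc
  rw [ha, hb]
  constructor
  · intro h1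
    by_contra h2
    rw [if_pos h1, if_neg h2] at hcc'
    exact absurd hcc' (by decide)
  · intro h2
    by_contra h1
    rw [if_neg h1, if_pos h2] at hcc'
    exact absurd hcc'.symm (by decide)


end StructuredSunflowers
end
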